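/- arXiv:1110.6034 — 4 statements merged into one kernel-verified Lean document; each statement's English description precedes it below -/
import Mathlib

section
/- Let n ≥ 2, N = {1,…,n}, and let (ϱ_I)_{I ⊆ N} be real numbers with ϱ_∅ = 0. Then the following identity holds: ∑_{ℓ=1}^{n} (-1)^{ℓ-1}(ℓ-1)! ∑_{D ∈ 𝒟_N^ℓ} ∏_{k=1}^{ℓ} ∏_{J ⊆ D_k} (1 + ϱ_J) = ∑_{k ≥ 1} ∑_{{I_1,…,I_k} ∈ ℐ_k} ∏_{h=1}^{k} ϱ_{I_h}, where 𝒟_N^ℓ is the set of partitions of N into ℓ nonempty atoms, and ℐ_k is the set of families of k distinct subsets of N whose union is N and which are connected (any two members joined by a chain of pairwise-intersecting members of the family). -/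
open Finset

/-- The set of partitions of `Fin n` into exactly `ℓ` nonempty, pairwise
disjoint blocks whose union is everything. -/
noncomputable def partitionsInto (n ℓ : ℕ) : Finset (Finset (Finset (Fin n))) := by
  classical
  exact Finset.univ.filter fun P =>
    P.card = ℓ ∧ (∀ B ∈ P, B.Nonempty) ∧
    (∀ B ∈ P, ∀ B' ∈ P, B ≠ B' → Disjoint B B') ∧ P.sup id = Finset.univ

/-- A family of sets is connected iff any two of its members are joined by a
chain of pairwise-intersecting members of the family. -/
def FamConnected {α : Type*} [DecidableEq α] (Fam : Finset (Finset α)) : Prop :=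
  ∀ I ∈ Fam, ∀ I' ∈ Fam,
    Relation.ReflTransGen (fun A B => A ∈ Fam ∧ B ∈ Fam ∧ (A ∩ B).Nonempty) I I'

namespace Cancel


def st : ℕ → ℕ → ℕ
  | 0, 0 => 1
  | 0, _+1 => 0
  | _+1, 0 => 0
  | m+1, ℓ+1 => (ℓ+1) * st m (ℓ+1) + st m ℓ

open Classical in
noncomputable def parts {α : Type*} [DecidableEq α] (s : Finset α) (ℓ : ℕ) :
    Finset (Finset (Finset α)) :=
  (s.powerset.powerset).filter fun P =>
    P.card = ℓ ∧ (∀ B ∈ P, B.Nonempty) ∧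
    (∀ B ∈ P, ∀ B' ∈ P, B ≠ B' → Disjoint B B') ∧ P.sup id = s

lemma mem_parts {α : Type*} [DecidableEq α] {s : Finset α} {ℓ : ℕ}
    {P : Finset (Finset α)} :
    P ∈ parts s ℓ ↔ P.card = ℓ ∧ (∀ B ∈ P, B.Nonempty) ∧
      (∀ B ∈ P, ∀ B' ∈ P, B ≠ B' → Disjoint B B') ∧ P.sup id = s := by
  classical
  constructor
  · intro h; exact (Finset.mem_filter.mp h).2
  · intro h
    refine Finset.mem_filter.mpr ⟨?_, h⟩
    simp only [Finset.mem_powerset]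
    intro B hB
    simp only [Finset.mem_powerset]
    exact h.2.2.2 ▸ Finset.le_sup (f := id) hB

lemma subset_of_mem_parts {α : Type*} [DecidableEq α] {s : Finset α} {ℓ : ℕ}
    {P : Finset (Finset α)} (hP : P ∈ parts s ℓ) {B : Finset α} (hB : B ∈ P) :
    B ⊆ s :=
  (mem_parts.mp hP).2.2.2 ▸ Finset.le_sup (f := id) hB

theorem card_parts {α : Type*} [DecidableEq α] (s : Finset α) (ℓ : ℕ) :
    (parts s ℓ).card = st s.card ℓ := by
  classical
  induction s using Finset.induction_on generalizing ℓ with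
  | empty =>
    cases ℓ with
    | zero =>
      have : parts (∅ : Finset α) 0 = {∅} := by
        ext P
        simp only [mem_parts, Finset.mem_singleton]
        constructor
        · rintro ⟨h1, -, -, -⟩; exact Finset.card_eq_zero.mp h1
        · rintro rfl; simp
      rw [this]; rfl
    | succ ℓ =>
      have : parts (∅ : Finset α) (ℓ+1) = ∅ := by
        ext P
        simp only [mem_parts, Finset.notMem_empty, iff_false, not_and]
        intro h1 h2 _
        obtain ⟨B, hB⟩ := Finset.card_pos.mp (by omega : 0 < P.card)
        obtain ⟨x, hx⟩ := h2 B hB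
        intro h4
        have : x ∈ P.sup id := Finset.le_sup (f := id) hB hx
        rw [h4] at this
        exact Finset.notMem_empty x this
      rw [this]; rfl
  | @insert a s ha ih =>
    rw [Finset.card_insert_of_notMem ha]
    cases ℓ with
    | zero =>
      have : parts (insert a s) 0 = ∅ := by
        ext P
        simp only [mem_parts, Finset.notMem_empty, iff_false, not_and]
        intro h1 _ _ h4
        rw [Finset.card_eq_zero.mp h1] at h4
        simp only [Finset.sup_empty] at h4
        exact absurd h4.symm (by simp)
      rw [this]; rfl
    | succ ℓ =>
      have key : ∀ {P B}, P ∈ parts (insert a s) (ℓ+1) → B ∈ P → B ≠ {a} → B ∈ P.erase {a} := by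
        intro P B hP hB hne
        exact Finset.mem_erase.mpr ⟨hne, hB⟩
      -- split by whether {a} is a block
      have hsplit := Finset.card_filter_add_card_filter_not
        (s := parts (insert a s) (ℓ+1)) (fun D => {a} ∈ D)
      have claim1 : ((parts (insert a s) (ℓ+1)).filter (fun D => {a} ∈ D)).card
          = (parts s ℓ).card := by
        refine Finset.card_bij' (fun D _ => D.erase {a}) (fun P _ => insert {a} P) ?_ ?_ ?_ ?_
        · intro D hD
          rw [Finset.mem_filter] at hD
          obtain ⟨hD, hsing⟩ := hD
          rw [mem_parts] at hD
          obtain ⟨hcard, hne, hdisj, hsup⟩ := hD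
          have haB : ∀ B ∈ D.erase {a}, a ∉ B := by
            intro B hB haB
            exact Finset.disjoint_left.mp
              (hdisj B (Finset.mem_of_mem_erase hB) {a} hsing (Finset.ne_of_mem_erase hB))
              haB (Finset.mem_singleton_self a)
          rw [mem_parts]
          refine ⟨by rw [Finset.card_erase_of_mem hsing, hcard]; rfl,
            fun B hB => hne B (Finset.mem_of_mem_erase hB),
            fun B hB B' hB' h => hdisj B (Finset.mem_of_mem_erase hB) B'
              (Finset.mem_of_mem_erase hB') h, ?_⟩
          show (D.erase {a}).sup id = s
          apply Finset.Subset.antisymm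
          · intro x hx
            rw [Finset.mem_sup] at hx
            obtain ⟨B, hB, hxB⟩ := hx
            have hBs : B ⊆ insert a s := by
              rw [← hsup]; exact Finset.le_sup (f := id) (Finset.mem_of_mem_erase hB)
            rcases Finset.mem_insert.mp (hBs hxB) with h | h
            · exact absurd (h ▸ hxB) (haB B hB)
            · exact h
          · intro x hx
            have hx' : x ∈ D.sup id := by
              rw [hsup]; exact Finset.mem_insert_of_mem hx
            rw [Finset.mem_sup] at hx'
            obtain ⟨B, hB, hxB⟩ := hx'
            have : B ≠ {a} := by
              rintro rfl
              exact ha (Finset.mem_singleton.mp hxB ▸ hx)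
            exact Finset.le_sup (f := id) (Finset.mem_erase.mpr ⟨this, hB⟩) hxB
        · intro P hP
          rw [mem_parts] at hP
          obtain ⟨hcard, hne, hdisj, hsup⟩ := hP
          have hblock : ∀ B ∈ P, B ⊆ s := fun B hB => hsup ▸ Finset.le_sup (f := id) hB
          have hnotmem : {a} ∉ P := by
            intro h
            exact ha (hblock _ h (Finset.mem_singleton_self a))
          rw [Finset.mem_filter]
          constructor
          · rw [mem_parts]
            refine ⟨by rw [Finset.card_insert_of_notMem hnotmem, hcard],
              ?_, ?_, ?_⟩
            · intro B hB
              rcases Finset.mem_insert.mp hB with rfl | h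
              · exact Finset.singleton_nonempty a
              · exact hne B h
            · intro B hB B' hB' hBB'
              rcases Finset.mem_insert.mp hB with rfl | h
              · rcases Finset.mem_insert.mp hB' with rfl | h'
                · exact absurd rfl hBB'
                · exact Finset.disjoint_singleton_left.mpr (fun hmem => ha (hblock _ h' hmem))
              · rcases Finset.mem_insert.mp hB' with rfl | h'
                · exact (Finset.disjoint_singleton_right).mpr (fun hmem => ha (hblock _ h hmem))
                · exact hdisj B h B' h' hBB'
            · rw [Finset.sup_insert, hsup]
              rw [Finset.sup_eq_union]
              rw [Finset.insert_eq]
              rfl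
          · exact Finset.mem_insert_self _ _
        · intro D hD
          rw [Finset.mem_filter] at hD
          exact Finset.insert_erase hD.2
        · intro P hP
          rw [mem_parts] at hP
          apply Finset.erase_insert
          intro h
          exact ha (subset_of_mem_parts (mem_parts.mpr hP) h (Finset.mem_singleton_self a))
      have claim2 : ((parts (insert a s) (ℓ+1)).filter (fun D => {a} ∉ D)).card
          = ((parts s (ℓ+1)).sigma fun P => P).card := by
        symm
        refine Finset.card_bij (fun p _ => insert (insert a p.2) (p.1.erase p.2)) ?_ ?_ ?_
        · rintro ⟨P, B⟩ hp
          rw [Finset.mem_sigma] at hp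
          obtain ⟨hP, hB⟩ := hp
          simp only [id] at hB
          rw [mem_parts] at hP
          obtain ⟨hcard, hne, hdisj, hsup⟩ := hP
          have hblock : ∀ C ∈ P, C ⊆ s := fun C hC => hsup ▸ Finset.le_sup (f := id) hC
          have hnotmemD : insert a B ∉ P.erase B := by
            intro h
            exact ha (hblock _ (Finset.mem_of_mem_erase h) (Finset.mem_insert_self a B))
          rw [Finset.mem_filter]
          refine ⟨mem_parts.mpr ⟨?_, ?_, ?_, ?_⟩, ?_⟩
          · rw [Finset.card_insert_of_notMem hnotmemD, Finset.card_erase_of_mem hB, hcard]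
            omega
          · intro C hC
            rcases Finset.mem_insert.mp hC with rfl | h
            · exact Finset.insert_nonempty a B
            · exact hne C (Finset.mem_of_mem_erase h)
          · intro C hC C' hC' hCC'
            rcases Finset.mem_insert.mp hC with rfl | h
            · rcases Finset.mem_insert.mp hC' with rfl | h'
              · exact absurd rfl hCC'
              · rw [Finset.disjoint_insert_left]
                refine ⟨fun hmem => ha (hblock _ (Finset.mem_of_mem_erase h') hmem), ?_⟩
                exact hdisj B hB C' (Finset.mem_of_mem_erase h')
                  (Ne.symm (Finset.ne_of_mem_erase h'))
            · rcases Finset.mem_insert.mp hC' with rfl | h'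
              · rw [Finset.disjoint_insert_right]
                refine ⟨fun hmem => ha (hblock _ (Finset.mem_of_mem_erase h) hmem), ?_⟩
                exact hdisj C (Finset.mem_of_mem_erase h) B hB (Finset.ne_of_mem_erase h)
              · exact hdisj C (Finset.mem_of_mem_erase h) C' (Finset.mem_of_mem_erase h') hCC'
          · apply Finset.Subset.antisymm
            · intro x hx
              rw [Finset.mem_sup] at hx
              obtain ⟨C, hC, hxC⟩ := hx
              rcases Finset.mem_insert.mp hC with rfl | h
              · rcases Finset.mem_insert.mp hxC with rfl | h'
                · exact Finset.mem_insert_self x s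
                · exact Finset.mem_insert_of_mem (hblock B hB h')
              · exact Finset.mem_insert_of_mem (hblock C (Finset.mem_of_mem_erase h) hxC)
            · intro x hx
              rw [Finset.mem_sup]
              rcases Finset.mem_insert.mp hx with rfl | hxs
              · exact ⟨insert x B, Finset.mem_insert_self _ _, Finset.mem_insert_self x B⟩
              · have : x ∈ P.sup id := hsup ▸ hxs
                rw [Finset.mem_sup] at this
                obtain ⟨C, hC, hxC⟩ := this
                by_cases hCB : C = B
                · exact ⟨insert a B, Finset.mem_insert_self _ _,
                    Finset.mem_insert_of_mem (hCB ▸ hxC)⟩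
                · exact ⟨C, Finset.mem_insert_of_mem (Finset.mem_erase.mpr ⟨hCB, hC⟩), hxC⟩
          · intro hmem
            rcases Finset.mem_insert.mp hmem with h | h
            · have h' : ({a} : Finset α) = insert a B := h
              have : a ∈ B := by
                have hBsub : B ⊆ ({a} : Finset α) := by
                  intro x hx
                  rw [h']
                  exact Finset.mem_insert_of_mem hx
                obtain ⟨x, hx⟩ := hne B hB
                have := hBsub hx
                rw [Finset.mem_singleton] at this
                exact this ▸ hx
              exact ha (hblock B hB this)
            · exact ha (hblock _ (Finset.mem_of_mem_erase h) (Finset.mem_singleton_self a))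
        · rintro ⟨P, B⟩ h₁ ⟨P', B'⟩ h₂ heq
          rw [Finset.mem_sigma] at h₁ h₂
          obtain ⟨hP, hB⟩ := h₁
          obtain ⟨hP', hB'⟩ := h₂
          simp only [id] at hB hB'
          simp only at heq
          have hsub : ∀ {Q : Finset (Finset α)} {C : Finset α}, Q ∈ parts s (ℓ+1) → C ∈ Q →
              a ∉ C := fun hQ hC hmem => ha (subset_of_mem_parts hQ hC hmem)
          have key1 : insert a B = insert a B' := by
            have : insert a B ∈ insert (insert a B') (P'.erase B') := by
              rw [← heq]; exact Finset.mem_insert_self _ _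
            rcases Finset.mem_insert.mp this with h | h
            · exact h
            · exact absurd (Finset.mem_insert_self a B)
                (fun hmem => hsub hP' (Finset.mem_of_mem_erase h) hmem)
          have hBB' : B = B' := by
            have h1 : (insert a B).erase a = B := Finset.erase_insert (hsub hP hB)
            have h2 : (insert a B').erase a = B' := Finset.erase_insert (hsub hP' hB')
            rw [← h1, ← h2, key1]
          subst hBB'
          have hPP' : P = P' := by
            have e1 : P.erase B = P'.erase B := by
              have n1 : insert a B ∉ P.erase B := fun h =>
                ha (subset_of_mem_parts hP (Finset.mem_of_mem_erase h) (Finset.mem_insert_self a B))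
              have n2 : insert a B ∉ P'.erase B := fun h =>
                ha (subset_of_mem_parts hP' (Finset.mem_of_mem_erase h) (Finset.mem_insert_self a B))
              have := heq
              rw [key1] at this
              calc P.erase B = (insert (insert a B) (P.erase B)).erase (insert a B) :=
                    (Finset.erase_insert n1).symm
                _ = (insert (insert a B) (P'.erase B)).erase (insert a B) := by rw [this]
                _ = P'.erase B := Finset.erase_insert n2
            calc P = insert B (P.erase B) := (Finset.insert_erase hB).symm
              _ = insert B (P'.erase B) := by rw [e1]
              _ = P' := Finset.insert_erase hB'
          subst hPP'
          rfl
        · intro D hD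
          rw [Finset.mem_filter] at hD
          obtain ⟨hD, hnotsing⟩ := hD
          rw [mem_parts] at hD
          obtain ⟨hcard, hne, hdisj, hsup⟩ := hD
          have haD : a ∈ D.sup id := by rw [hsup]; exact Finset.mem_insert_self a s
          rw [Finset.mem_sup] at haD
          obtain ⟨Ba, hBa, haBa⟩ := haD
          set B := Ba.erase a with hBdef
          have hBane : Ba ≠ {a} := fun h => hnotsing (h ▸ hBa)
          have hBne : B.Nonempty := by
            rw [Finset.nonempty_iff_ne_empty]
            intro h
            apply hBane
            apply Finset.Subset.antisymm
            · intro x hx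
              rw [Finset.mem_singleton]
              by_contra hne'
              have : x ∈ B := Finset.mem_erase.mpr ⟨hne', hx⟩
              rw [h] at this
              exact Finset.notMem_empty x this
            · intro x hx
              rw [Finset.mem_singleton] at hx
              exact hx ▸ haBa
          have hBnotmem : B ∉ D.erase Ba := by
            intro h
            have hBD := Finset.mem_of_mem_erase h
            have hBneBa : B ≠ Ba := Finset.ne_of_mem_erase h
            have := hdisj B hBD Ba hBa hBneBa
            obtain ⟨x, hx⟩ := hBne
            exact Finset.disjoint_left.mp this hx (Finset.mem_of_mem_erase hx)
          have hCnota : ∀ C ∈ D.erase Ba, a ∉ C := by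
            intro C hC hmem
            exact Finset.disjoint_left.mp
              (hdisj C (Finset.mem_of_mem_erase hC) Ba hBa (Finset.ne_of_mem_erase hC))
              hmem haBa
          have hblocks : ∀ C ∈ D, C ⊆ insert a s := fun C hC =>
            hsup ▸ Finset.le_sup (f := id) hC
          refine ⟨⟨insert B (D.erase Ba), B⟩, ?_, ?_⟩
          · rw [Finset.mem_sigma]
            constructor
            · rw [mem_parts]
              refine ⟨?_, ?_, ?_, ?_⟩
              · rw [Finset.card_insert_of_notMem hBnotmem, Finset.card_erase_of_mem hBa, hcard]
                omega
              · intro C hC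
                rcases Finset.mem_insert.mp hC with rfl | h
                · exact hBne
                · exact hne C (Finset.mem_of_mem_erase h)
              · intro C hC C' hC' hCC'
                rcases Finset.mem_insert.mp hC with rfl | h
                · rcases Finset.mem_insert.mp hC' with rfl | h'
                  · exact absurd rfl hCC'
                  · exact Finset.disjoint_of_subset_left (Finset.erase_subset a Ba)
                      (hdisj Ba hBa C' (Finset.mem_of_mem_erase h')
                        (Ne.symm (Finset.ne_of_mem_erase h')))
                · rcases Finset.mem_insert.mp hC' with rfl | h'
                  · exact Finset.disjoint_of_subset_right (Finset.erase_subset a Ba)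
                      (hdisj C (Finset.mem_of_mem_erase h) Ba hBa (Finset.ne_of_mem_erase h))
                  · exact hdisj C (Finset.mem_of_mem_erase h) C' (Finset.mem_of_mem_erase h') hCC'
              · apply Finset.Subset.antisymm
                · intro x hx
                  rw [Finset.mem_sup] at hx
                  obtain ⟨C, hC, hxC⟩ := hx
                  rcases Finset.mem_insert.mp hC with rfl | h
                  · have hxBa : x ∈ Ba := Finset.mem_of_mem_erase hxC
                    have hxne : x ≠ a := Finset.ne_of_mem_erase hxC
                    rcases Finset.mem_insert.mp (hblocks Ba hBa hxBa) with h' | h'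
                    · exact absurd h' hxne
                    · exact h'
                  · rcases Finset.mem_insert.mp
                        (hblocks C (Finset.mem_of_mem_erase h) hxC) with h' | h'
                    · exact absurd (h' ▸ hxC) (hCnota C h)
                    · exact h'
                · intro x hx
                  rw [Finset.mem_sup]
                  have hxne : x ≠ a := fun h => ha (h ▸ hx)
                  have : x ∈ D.sup id := by
                    rw [hsup]; exact Finset.mem_insert_of_mem hx
                  rw [Finset.mem_sup] at this
                  obtain ⟨C, hC, hxC⟩ := this
                  by_cases hCBa : C = Ba
                  · exact ⟨B, Finset.mem_insert_self _ _,
                      Finset.mem_erase.mpr ⟨hxne, hCBa ▸ hxC⟩⟩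
                  · exact ⟨C, Finset.mem_insert_of_mem (Finset.mem_erase.mpr ⟨hCBa, hC⟩), hxC⟩
            · exact Finset.mem_insert_self _ _
          · simp only
            have e1 : insert a B = Ba := Finset.insert_erase haBa
            have e2 : (insert B (D.erase Ba)).erase B = D.erase Ba :=
              Finset.erase_insert hBnotmem
            rw [e2, e1]
            exact Finset.insert_erase hBa
      rw [← hsplit, claim1, claim2, Finset.card_sigma]
      have : ∀ P ∈ parts s (ℓ+1), P.card = ℓ + 1 := by
        intro P hP
        exact (mem_parts.mp hP).1
      rw [Finset.sum_congr rfl this, Finset.sum_const, smul_eq_mul]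
      rw [ih, ih]
      show st (s.card) ℓ + st (s.card) (ℓ+1) * (ℓ+1) = (ℓ+1) * st (s.card) (ℓ+1) + st (s.card) ℓ
      ring

lemma st_of_lt : ∀ {m ℓ : ℕ}, m < ℓ → st m ℓ = 0 := by
  intro m
  induction m with
  | zero =>
    intro ℓ h
    cases ℓ with
    | zero => omega
    | succ ℓ => rfl
  | succ m ih =>
    intro ℓ h
    cases ℓ with
    | zero => omega
    | succ ℓ =>
      show (ℓ+1) * st m (ℓ+1) + st m ℓ = 0
      rw [ih (by omega), ih (by omega)]
      ring

lemma T_succ (m : ℕ) (hm : 1 ≤ m) :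
    ∑ j ∈ Finset.range (m+1), (-1:ℝ)^j * (Nat.factorial j : ℝ) * (st (m+1) (j+1) : ℝ) = 0 := by
  have expand : ∀ j : ℕ, (st (m+1) (j+1) : ℝ) = ((j:ℝ)+1) * st m (j+1) + st m j := by
    intro j
    show ((((j+1) * st m (j+1) + st m j : ℕ)) : ℝ) = _
    push_cast
    ring
  have split : ∑ j ∈ Finset.range (m+1), (-1:ℝ)^j * (Nat.factorial j : ℝ) * (st (m+1) (j+1) : ℝ)
      = (∑ j ∈ Finset.range (m+1), (-1:ℝ)^j * (Nat.factorial (j+1) : ℝ) * (st m (j+1) : ℝ))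
        + ∑ j ∈ Finset.range (m+1), (-1:ℝ)^j * (Nat.factorial j : ℝ) * (st m j : ℝ) := by
    rw [← Finset.sum_add_distrib]
    apply Finset.sum_congr rfl
    intro j _
    rw [expand j, Nat.factorial_succ]
    push_cast
    ring
  rw [split]
  have h1 : ∑ j ∈ Finset.range (m+1), (-1:ℝ)^j * (Nat.factorial (j+1) : ℝ) * (st m (j+1) : ℝ)
      = ∑ j ∈ Finset.range m, (-1:ℝ)^j * (Nat.factorial (j+1) : ℝ) * (st m (j+1) : ℝ) := by
    rw [Finset.sum_range_succ, st_of_lt (by omega)]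
    simp
  have h2 : ∑ j ∈ Finset.range (m+1), (-1:ℝ)^j * (Nat.factorial j : ℝ) * (st m j : ℝ)
      = ∑ j ∈ Finset.range m, (-1:ℝ)^(j+1) * (Nat.factorial (j+1) : ℝ) * (st m (j+1) : ℝ) := by
    rw [Finset.sum_range_succ']
    have : (st m 0 : ℝ) = 0 := by
      cases m with
      | zero => omega
      | succ m => simp [st]
    rw [this]
    simp
  rw [h1, h2, ← Finset.sum_add_distrib]
  apply Finset.sum_eq_zero
  intro j _
  ring

lemma st_alt_sum {m n : ℕ} (hm : 1 ≤ m) (hmn : m ≤ n) :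
    ∑ ℓ ∈ Finset.Icc 1 n, (-1:ℝ)^(ℓ-1) * (Nat.factorial (ℓ-1) : ℝ) * (st m ℓ : ℝ)
      = if m = 1 then 1 else 0 := by
  have hIcc : Finset.Icc 1 n = Finset.Ico 1 (n+1) := by
    rw [Finset.Ico_add_one_right_eq_Icc]
  rw [hIcc, Finset.sum_Ico_eq_sum_range]
  simp only [Nat.add_sub_cancel]
  have reindex : ∀ j : ℕ, (-1:ℝ)^(1+j-1) * (Nat.factorial (1+j-1) : ℝ) * (st m (1+j) : ℝ)
      = (-1:ℝ)^j * (Nat.factorial j : ℝ) * (st m (j+1) : ℝ) := by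
    intro j
    have : 1 + j - 1 = j := by omega
    rw [this, Nat.add_comm 1 j]
  rw [Finset.sum_congr rfl fun j _ => reindex j]
  -- reduce to sum over range m
  have hsub : ∑ j ∈ Finset.range n, (-1:ℝ)^j * (Nat.factorial j : ℝ) * (st m (j+1) : ℝ)
      = ∑ j ∈ Finset.range m, (-1:ℝ)^j * (Nat.factorial j : ℝ) * (st m (j+1) : ℝ) := by
    symm
    apply Finset.sum_subset
    · intro j hj
      rw [Finset.mem_range] at hj ⊢
      omega
    · intro j _ hj
      rw [Finset.mem_range, not_lt] at hj
      rw [st_of_lt (by omega)]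
      simp
  rw [hsub]
  rcases Nat.exists_eq_add_of_le hm with ⟨k, rfl⟩
  cases k with
  | zero =>
    norm_num [st]
  | succ k =>
    have : 1 + (k+1) = (k+1) + 1 := by omega
    rw [this, if_neg (by omega)]
    exact T_succ (k+1) (by omega)




variable {n : ℕ}

def step (Fam : Finset (Finset (Fin n))) (x y : Fin n) : Prop := ∃ I ∈ Fam, x ∈ I ∧ y ∈ I

def rel (Fam : Finset (Finset (Fin n))) : Fin n → Fin n → Prop :=
  Relation.ReflTransGen (step Fam)

lemma rel_symm {Fam : Finset (Finset (Fin n))} {x y : Fin n} (h : rel Fam x y) :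
    rel Fam y x := by
  haveI : Std.Symm (step Fam) := ⟨fun _ _ ⟨I, hI, h1, h2⟩ => ⟨I, hI, h2, h1⟩⟩
  exact Std.Symm.symm (r := Relation.ReflTransGen (step Fam)) _ _ h

open Classical in
noncomputable def comp (Fam : Finset (Finset (Fin n))) (x : Fin n) : Finset (Fin n) :=
  Finset.univ.filter (rel Fam x)

noncomputable def comps (Fam : Finset (Finset (Fin n))) : Finset (Finset (Fin n)) :=
  Finset.univ.image (comp Fam)

lemma mem_comp {Fam : Finset (Finset (Fin n))} {x y : Fin n} :
    y ∈ comp Fam x ↔ rel Fam x y := by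
  classical
  simp [comp]

lemma self_mem_comp {Fam : Finset (Finset (Fin n))} (x : Fin n) : x ∈ comp Fam x :=
  mem_comp.mpr Relation.ReflTransGen.refl

lemma comp_eq_of_rel {Fam : Finset (Finset (Fin n))} {x y : Fin n} (h : rel Fam x y) :
    comp Fam x = comp Fam y := by
  ext z
  rw [mem_comp, mem_comp]
  exact ⟨fun hz => (rel_symm h).trans hz, fun hz => h.trans hz⟩

lemma comps_nonempty {Fam : Finset (Finset (Fin n))} {c : Finset (Fin n)}
    (hc : c ∈ comps Fam) : c.Nonempty := by
  obtain ⟨x, -, rfl⟩ := Finset.mem_image.mp hc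
  exact ⟨x, self_mem_comp x⟩

lemma comps_disjoint {Fam : Finset (Finset (Fin n))} {c c' : Finset (Fin n)}
    (hc : c ∈ comps Fam) (hc' : c' ∈ comps Fam) (hne : c ≠ c') : Disjoint c c' := by
  obtain ⟨x, -, rfl⟩ := Finset.mem_image.mp hc
  obtain ⟨y, -, rfl⟩ := Finset.mem_image.mp hc'
  rw [Finset.disjoint_left]
  intro z hz hz'
  exact hne (comp_eq_of_rel ((mem_comp.mp hz).trans (rel_symm (mem_comp.mp hz'))))

lemma comps_sup {Fam : Finset (Finset (Fin n))} : (comps Fam).sup id = Finset.univ := by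
  apply Finset.Subset.antisymm (Finset.subset_univ _)
  intro x _
  rw [Finset.mem_sup]
  exact ⟨comp Fam x, Finset.mem_image.mpr ⟨x, Finset.mem_univ x, rfl⟩, self_mem_comp x⟩

lemma mem_partitionsInto {ℓ : ℕ} {D : Finset (Finset (Fin n))} :
    D ∈ partitionsInto n ℓ ↔ D.card = ℓ ∧ (∀ B ∈ D, B.Nonempty) ∧
      (∀ B ∈ D, ∀ B' ∈ D, B ≠ B' → Disjoint B B') ∧ D.sup id = Finset.univ := by
  classical
  rw [partitionsInto]
  simp only [Finset.mem_filter, Finset.mem_univ, true_and]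

/-- Compatibility with the members of `Fam` is the same as compatibility with its components. -/
lemma compat_iff {Fam D : Finset (Finset (Fin n))} {ℓ : ℕ}
    (hFam : ∀ I ∈ Fam, I.Nonempty) (hD : D ∈ partitionsInto n ℓ) :
    (∀ I ∈ Fam, ∃ B ∈ D, I ⊆ B) ↔ (∀ c ∈ comps Fam, ∃ B ∈ D, c ⊆ B) := by
  obtain ⟨hcard, hne, hdisj, hsup⟩ := mem_partitionsInto.mp hD
  constructor
  · intro h c hc
    obtain ⟨x, -, rfl⟩ := Finset.mem_image.mp hc
    have hx : x ∈ D.sup id := hsup ▸ Finset.mem_univ x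
    rw [Finset.mem_sup] at hx
    obtain ⟨B, hB, hxB⟩ := hx
    refine ⟨B, hB, ?_⟩
    intro y hy
    rw [mem_comp] at hy
    -- induction along the chain
    induction hy with
    | refl => exact hxB
    | tail hr hstep ih =>
      rename_i b c'
      obtain ⟨I, hI, hbI, hcI⟩ := hstep
      obtain ⟨B', hB', hIB'⟩ := h I hI
      have hbB : b ∈ B := ih
      have : B = B' := by
        by_contra hne'
        exact Finset.disjoint_left.mp (hdisj B hB B' hB' hne') hbB (hIB' hbI)
      rw [this]
      exact hIB' hcI
  · intro h I hI
    obtain ⟨x, hx⟩ := hFam I hI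
    obtain ⟨B, hB, hcB⟩ := h (comp Fam x) (Finset.mem_image.mpr ⟨x, Finset.mem_univ x, rfl⟩)
    refine ⟨B, hB, fun y hy => hcB (mem_comp.mpr (Relation.ReflTransGen.single ⟨I, hI, hx, hy⟩))⟩

/-- chain of members from a chain of elements -/
lemma memchain_of_rel {Fam : Finset (Finset (Fin n))} {x y : Fin n} (h : rel Fam x y) :
    ∀ {I}, I ∈ Fam → x ∈ I → ∀ {I'}, I' ∈ Fam → y ∈ I' →
      Relation.ReflTransGen (fun A B => A ∈ Fam ∧ B ∈ Fam ∧ (A ∩ B).Nonempty) I I' := by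
  induction h with
  | refl =>
    intro I hI hxI I' hI' hxI'
    exact Relation.ReflTransGen.single ⟨hI, hI', ⟨x, Finset.mem_inter.mpr ⟨hxI, hxI'⟩⟩⟩
  | tail hr hstep ih =>
    rename_i b c
    intro I hI hxI I' hI' hcI'
    obtain ⟨J, hJ, hbJ, hcJ⟩ := hstep
    exact (ih hI hxI hJ hbJ).tail ⟨hJ, hI', ⟨c, Finset.mem_inter.mpr ⟨hcJ, hcI'⟩⟩⟩

lemma rel_of_memchain {Fam : Finset (Finset (Fin n))} {I I' : Finset (Fin n)}
    (h : Relation.ReflTransGen (fun A B => A ∈ Fam ∧ B ∈ Fam ∧ (A ∩ B).Nonempty) I I') :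
    ∀ {x}, x ∈ I → ∀ {y}, y ∈ I' → I ∈ Fam → rel Fam x y := by
  induction h with
  | refl =>
    intro x hx y hy hI
    exact Relation.ReflTransGen.single ⟨I, hI, hx, hy⟩
  | tail hr hstep ih =>
    rename_i J K
    intro x hx y hy hI
    obtain ⟨hJ, hK, z, hz⟩ := hstep
    rw [Finset.mem_inter] at hz
    exact ((ih hx hz.1 hI).tail ⟨K, hK, hz.2, hy⟩)

lemma card_comps_eq_one_iff {Fam : Finset (Finset (Fin n))} (hn : 2 ≤ n) (h0 : ∅ ∉ Fam) :
    (comps Fam).card = 1 ↔ (Fam.sup id = Finset.univ ∧ FamConnected Fam) := by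
  constructor
  · intro h1
    obtain ⟨c, hc⟩ := Finset.card_eq_one.mp h1
    have hrel : ∀ x y : Fin n, rel Fam x y := by
      intro x y
      have hx : comp Fam x ∈ comps Fam := Finset.mem_image.mpr ⟨x, Finset.mem_univ x, rfl⟩
      have hy : comp Fam y ∈ comps Fam := Finset.mem_image.mpr ⟨y, Finset.mem_univ y, rfl⟩
      rw [hc, Finset.mem_singleton] at hx hy
      have : y ∈ comp Fam x := by
        rw [hx, ← hy]
        exact self_mem_comp y
      exact mem_comp.mp this
    haveI : Nontrivial (Fin n) := Fin.nontrivial_iff_two_le.mpr hn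
    have hcover : ∀ x : Fin n, ∃ I ∈ Fam, x ∈ I := by
      intro x
      obtain ⟨y, hy⟩ := exists_ne x
      rcases (hrel x y).cases_head with heq | ⟨c, ⟨I, hI, hxI, -⟩, -⟩
      · exact absurd heq.symm hy
      · exact ⟨I, hI, hxI⟩
    constructor
    · apply Finset.Subset.antisymm (Finset.subset_univ _)
      intro x _
      rw [Finset.mem_sup]
      obtain ⟨I, hI, hxI⟩ := hcover x
      exact ⟨I, hI, hxI⟩
    · intro I hI I' hI'
      obtain ⟨x, hx⟩ : I.Nonempty :=
        Finset.nonempty_iff_ne_empty.mpr (fun h => h0 (h ▸ hI))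
      obtain ⟨y, hy⟩ : I'.Nonempty :=
        Finset.nonempty_iff_ne_empty.mpr (fun h => h0 (h ▸ hI'))
      exact memchain_of_rel (hrel x y) hI hx hI' hy
  · rintro ⟨hcover, hconn⟩
    have hrel : ∀ x y : Fin n, rel Fam x y := by
      intro x y
      have hx : x ∈ Fam.sup id := hcover ▸ Finset.mem_univ x
      have hy : y ∈ Fam.sup id := hcover ▸ Finset.mem_univ y
      rw [Finset.mem_sup] at hx hy
      obtain ⟨I, hI, hxI⟩ := hx
      obtain ⟨I', hI', hyI'⟩ := hy
      exact rel_of_memchain (hconn I hI I' hI') hxI hyI' hI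
    rw [Finset.card_eq_one]
    refine ⟨comp Fam ⟨0, by omega⟩, ?_⟩
    ext c
    rw [Finset.mem_singleton]
    constructor
    · intro hc
      obtain ⟨x, -, rfl⟩ := Finset.mem_image.mp hc
      exact (comp_eq_of_rel (hrel ⟨0, by omega⟩ x)).symm
    · rintro rfl
      exact Finset.mem_image.mpr ⟨_, Finset.mem_univ _, rfl⟩


lemma card_compat {n : ℕ} {C : Finset (Finset (Fin n))} (ℓ : ℕ)
    (hCne : ∀ c ∈ C, c.Nonempty)
    (hCdisj : ∀ c ∈ C, ∀ c' ∈ C, c ≠ c' → Disjoint c c')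
    (hCsup : C.sup id = Finset.univ) :
    ((partitionsInto n ℓ).filter (fun D => ∀ c ∈ C, ∃ B ∈ D, c ⊆ B)).card
      = (parts C ℓ).card := by
  classical
  -- main fact: for compatible D and each block B of D, B is the union of the C-blocks inside it
  have fact1 : ∀ {D : Finset (Finset (Fin n))} {ℓ'}, D ∈ partitionsInto n ℓ' →
      (∀ c ∈ C, ∃ B ∈ D, c ⊆ B) → ∀ B ∈ D, (C.filter (· ⊆ B)).sup id = B := by
    intro D ℓ' hD hcompat B hB
    obtain ⟨hcard, hne, hdisj, hsup⟩ := mem_partitionsInto.mp hD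
    apply Finset.Subset.antisymm
    · intro x hx
      rw [Finset.mem_sup] at hx
      obtain ⟨c, hc, hxc⟩ := hx
      exact (Finset.mem_filter.mp hc).2 hxc
    · intro x hx
      have hxC : x ∈ C.sup id := hCsup ▸ Finset.mem_univ x
      rw [Finset.mem_sup] at hxC
      obtain ⟨c, hc, hxc⟩ := hxC
      obtain ⟨B', hB', hcB'⟩ := hcompat c hc
      have hBB' : B = B' := by
        by_contra hne'
        exact Finset.disjoint_left.mp (hdisj B hB B' hB' hne') hx (hcB' hxc)
      rw [Finset.mem_sup]
      exact ⟨c, Finset.mem_filter.mpr ⟨hc, hBB' ▸ hcB'⟩, hxc⟩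
  refine Finset.card_bij' (fun D _ => D.image (fun B => C.filter (· ⊆ B)))
    (fun Q _ => Q.image (fun q => q.sup id)) ?_ ?_ ?_ ?_
  · intro D hD
    rw [Finset.mem_filter] at hD
    obtain ⟨hD, hcompat⟩ := hD
    obtain ⟨hcard, hne, hdisj, hsup⟩ := mem_partitionsInto.mp hD
    have hinj : Set.InjOn (fun B => C.filter (· ⊆ B)) D := by
      intro B hB B' hB' heq
      have h1 := fact1 hD hcompat B hB
      have h2 := fact1 hD hcompat B' hB'
      simp only at heq
      rw [← h1, ← h2, heq]
    rw [mem_parts]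
    refine ⟨by rw [Finset.card_image_of_injOn hinj, hcard], ?_, ?_, ?_⟩
    · intro q hq
      obtain ⟨B, hB, rfl⟩ := Finset.mem_image.mp hq
      obtain ⟨x, hx⟩ := hne B hB
      have hxC : x ∈ C.sup id := hCsup ▸ Finset.mem_univ x
      rw [Finset.mem_sup] at hxC
      obtain ⟨c, hc, hxc⟩ := hxC
      obtain ⟨B', hB', hcB'⟩ := hcompat c hc
      have hBB' : B = B' := by
        by_contra hne'
        exact Finset.disjoint_left.mp (hdisj B hB B' hB' hne') hx (hcB' hxc)
      exact ⟨c, Finset.mem_filter.mpr ⟨hc, hBB' ▸ hcB'⟩⟩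
    · intro q hq q' hq' hqq'
      obtain ⟨B, hB, rfl⟩ := Finset.mem_image.mp hq
      obtain ⟨B', hB', rfl⟩ := Finset.mem_image.mp hq'
      have hBB' : B ≠ B' := fun h => hqq' (h ▸ rfl)
      rw [Finset.disjoint_left]
      intro c hc hc'
      obtain ⟨hcC, hcB⟩ := Finset.mem_filter.mp hc
      obtain ⟨-, hcB'⟩ := Finset.mem_filter.mp hc'
      obtain ⟨x, hx⟩ := hCne c hcC
      exact Finset.disjoint_left.mp (hdisj B hB B' hB' hBB') (hcB hx) (hcB' hx)
    · apply Finset.Subset.antisymm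
      · intro c hc
        rw [Finset.mem_sup] at hc
        obtain ⟨q, hq, hcq⟩ := hc
        obtain ⟨B, hB, rfl⟩ := Finset.mem_image.mp hq
        exact (Finset.mem_filter.mp hcq).1
      · intro c hc
        obtain ⟨B, hB, hcB⟩ := hcompat c hc
        rw [Finset.mem_sup]
        exact ⟨C.filter (· ⊆ B), Finset.mem_image.mpr ⟨B, hB, rfl⟩,
          Finset.mem_filter.mpr ⟨hc, hcB⟩⟩
  · intro Q hQ
    obtain ⟨hcard, hne, hdisj, hsup⟩ := mem_parts.mp hQ
    have hqC : ∀ {q}, q ∈ Q → ∀ {c}, c ∈ q → c ∈ C := by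
      intro q hq c hc
      exact hsup ▸ Finset.le_sup (f := id) hq hc
    have hdisjsup : ∀ q ∈ Q, ∀ q' ∈ Q, q ≠ q' → Disjoint (q.sup id) (q'.sup id) := by
      intro q hq q' hq' hne'
      rw [Finset.disjoint_left]
      intro x hx hx'
      rw [Finset.mem_sup] at hx hx'
      obtain ⟨c, hc, hxc⟩ := hx
      obtain ⟨c', hc', hxc'⟩ := hx'
      have : c = c' := by
        by_contra hcc
        exact Finset.disjoint_left.mp (hCdisj c (hqC hq hc) c' (hqC hq' hc') hcc) hxc hxc'
      exact Finset.disjoint_left.mp (hdisj q hq q' hq' hne') hc (this ▸ hc')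
    have hsupne : ∀ q ∈ Q, (q.sup id).Nonempty := by
      intro q hq
      obtain ⟨c, hc⟩ := hne q hq
      obtain ⟨x, hx⟩ := hCne c (hqC hq hc)
      exact ⟨x, Finset.mem_sup.mpr ⟨c, hc, hx⟩⟩
    have hinj : Set.InjOn (fun q : Finset (Finset (Fin n)) => q.sup id) (Q : Set (Finset (Finset (Fin n)))) := by
      intro q hq q' hq' heq
      simp only at heq
      by_contra hne'
      obtain ⟨x, hx⟩ := hsupne q hq
      exact Finset.disjoint_left.mp (hdisjsup q hq q' hq' hne') hx (heq ▸ hx)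
    rw [Finset.mem_filter]
    constructor
    · rw [mem_partitionsInto]
      refine ⟨by rw [Finset.card_image_of_injOn hinj, hcard], ?_, ?_, ?_⟩
      · intro B hB
        obtain ⟨q, hq, rfl⟩ := Finset.mem_image.mp hB
        exact hsupne q hq
      · intro B hB B' hB' hBB'
        obtain ⟨q, hq, rfl⟩ := Finset.mem_image.mp hB
        obtain ⟨q', hq', rfl⟩ := Finset.mem_image.mp hB'
        exact hdisjsup q hq q' hq' (fun h => hBB' (h ▸ rfl))
      · apply Finset.Subset.antisymm (Finset.subset_univ _)
        intro x _
        have hxC : x ∈ C.sup id := hCsup ▸ Finset.mem_univ x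
        rw [Finset.mem_sup] at hxC
        obtain ⟨c, hc, hxc⟩ := hxC
        have hcQ : c ∈ Q.sup id := hsup ▸ hc
        rw [Finset.mem_sup] at hcQ
        obtain ⟨q, hq, hcq⟩ := hcQ
        rw [Finset.mem_sup]
        exact ⟨q.sup id, Finset.mem_image.mpr ⟨q, hq, rfl⟩, Finset.mem_sup.mpr ⟨c, hcq, hxc⟩⟩
    · intro c hc
      have hcQ : c ∈ Q.sup id := hsup ▸ hc
      rw [Finset.mem_sup] at hcQ
      obtain ⟨q, hq, hcq⟩ := hcQ
      exact ⟨q.sup id, Finset.mem_image.mpr ⟨q, hq, rfl⟩, Finset.le_sup (f := id) hcq⟩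
  · intro D hD
    rw [Finset.mem_filter] at hD
    obtain ⟨hD, hcompat⟩ := hD
    show (D.image (fun B => C.filter (· ⊆ B))).image (fun q => q.sup id) = D
    rw [Finset.image_image]
    have : ∀ B ∈ D, ((C.filter (· ⊆ B)).sup id) = B := fact1 hD hcompat
    calc D.image (fun B => (C.filter (· ⊆ B)).sup id) = D.image id :=
          Finset.image_congr (fun B hB => this B hB)
      _ = D := Finset.image_id
  · intro Q hQ
    obtain ⟨hcard, hne, hdisj, hsup⟩ := mem_parts.mp hQ
    have hqC : ∀ {q}, q ∈ Q → ∀ {c}, c ∈ q → c ∈ C := by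
      intro q hq c hc
      exact hsup ▸ Finset.le_sup (f := id) hq hc
    show (Q.image (fun q => q.sup id)).image (fun B => C.filter (· ⊆ B)) = Q
    rw [Finset.image_image]
    have key : ∀ q ∈ Q, C.filter (· ⊆ q.sup id) = q := by
      intro q hq
      apply Finset.Subset.antisymm
      · intro c hc
        obtain ⟨hcC, hcsub⟩ := Finset.mem_filter.mp hc
        obtain ⟨x, hx⟩ := hCne c hcC
        have : x ∈ q.sup id := hcsub hx
        rw [Finset.mem_sup] at this
        obtain ⟨c', hc', hxc'⟩ := this
        have : c = c' := by
          by_contra hcc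
          exact Finset.disjoint_left.mp (hCdisj c hcC c' (hqC hq hc') hcc) hx hxc'
        exact this ▸ hc'
      · intro c hc
        exact Finset.mem_filter.mpr ⟨hqC hq hc, Finset.le_sup (f := id) hc⟩
    calc Q.image (fun q => C.filter (· ⊆ q.sup id)) = Q.image id :=
          Finset.image_congr (fun q hq => key q hq)
      _ = Q := Finset.image_id


end Cancel

open Classical in
/-- The combinatorial cancellation identity (2.5): expanding
`∑_ℓ (-1)^{ℓ-1}(ℓ-1)! ∑_{D ∈ 𝒟_N^ℓ} ∏_k ∏_{J ⊆ D_k} (1 + ϱ_J)` yields the sum of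
`∏_I ϱ_I` over connected families of distinct subsets of `N` covering `N`. -/
theorem cancellation_identity (n : ℕ) (hn : 2 ≤ n) (ϱ : Finset (Fin n) → ℝ)
    (h0 : ϱ ∅ = 0) :
    ∑ ℓ ∈ Finset.Icc 1 n, (-1 : ℝ) ^ (ℓ - 1) * (Nat.factorial (ℓ - 1) : ℝ) *
        ∑ D ∈ partitionsInto n ℓ, ∏ B ∈ D, ∏ J ∈ B.powerset, (1 + ϱ J) =
      ∑ Fam ∈ Finset.univ.filter (fun Fam : Finset (Finset (Fin n)) =>
          Fam.Nonempty ∧ Fam.sup id = Finset.univ ∧ FamConnected Fam),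
        ∏ I ∈ Fam, ϱ I := by
  classical
  set T : Finset (Finset (Fin n)) → Finset (Finset (Fin n)) :=
    fun D => D.biUnion (fun B => B.powerset.erase ∅) with hT
  -- Step 1: expansion of the product over a partition D
  have expand : ∀ {ℓ : ℕ} {D : Finset (Finset (Fin n))}, D ∈ partitionsInto n ℓ →
      ∏ B ∈ D, ∏ J ∈ B.powerset, (1 + ϱ J) = ∑ Fam ∈ (T D).powerset, ∏ I ∈ Fam, ϱ I := by
    intro ℓ D hD
    obtain ⟨hcard, hne, hdisj, hsup⟩ := Cancel.mem_partitionsInto.mp hD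
    have step1 : ∀ B : Finset (Fin n),
        ∏ J ∈ B.powerset, (1 + ϱ J) = ∏ J ∈ B.powerset.erase ∅, (1 + ϱ J) :=
      fun B => (Finset.prod_erase _ (by simp [h0])).symm
    rw [Finset.prod_congr rfl fun B _ => step1 B]
    have hpd : Set.PairwiseDisjoint (↑D) (fun B : Finset (Fin n) => B.powerset.erase ∅) := by
      intro B hB B' hB' hBB'
      simp only [Function.onFun]
      rw [Finset.disjoint_left]
      intro J hJ hJ'
      obtain ⟨hJne, hJB⟩ := Finset.mem_erase.mp hJ
      obtain ⟨-, hJB'⟩ := Finset.mem_erase.mp hJ'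
      rw [Finset.mem_powerset] at hJB hJB'
      obtain ⟨x, hx⟩ := Finset.nonempty_iff_ne_empty.mpr hJne
      exact Finset.disjoint_left.mp
        (hdisj B (Finset.mem_coe.mp hB) B' (Finset.mem_coe.mp hB') hBB') (hJB hx) (hJB' hx)
    rw [← Finset.prod_biUnion hpd]
    have : ∀ J ∈ T D, (1 + ϱ J) = (ϱ J + 1) := fun J _ => add_comm _ _
    rw [Finset.prod_congr rfl this, Finset.prod_add]
    apply Finset.sum_congr rfl
    intro Fam hFam
    simp
  -- Step 2: rewrite LHS as a sum over all families
  have powerset_eq : ∀ D : Finset (Finset (Fin n)),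
      (T D).powerset = (Finset.univ : Finset (Finset (Finset (Fin n)))).filter
        (fun Fam => Fam ⊆ T D) := by
    intro D
    ext Fam
    simp [Finset.mem_powerset]
  have lhs_eq : ∑ ℓ ∈ Finset.Icc 1 n, (-1 : ℝ) ^ (ℓ - 1) * (Nat.factorial (ℓ - 1) : ℝ) *
        ∑ D ∈ partitionsInto n ℓ, ∏ B ∈ D, ∏ J ∈ B.powerset, (1 + ϱ J)
      = ∑ Fam ∈ (Finset.univ : Finset (Finset (Finset (Fin n)))),
          (∑ ℓ ∈ Finset.Icc 1 n, (-1 : ℝ) ^ (ℓ - 1) * (Nat.factorial (ℓ - 1) : ℝ) *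
            (((partitionsInto n ℓ).filter (fun D => Fam ⊆ T D)).card : ℝ)) *
          ∏ I ∈ Fam, ϱ I := by
    have inner : ∀ ℓ ∈ Finset.Icc 1 n,
        (-1 : ℝ) ^ (ℓ - 1) * (Nat.factorial (ℓ - 1) : ℝ) *
          ∑ D ∈ partitionsInto n ℓ, ∏ B ∈ D, ∏ J ∈ B.powerset, (1 + ϱ J)
        = ∑ Fam ∈ (Finset.univ : Finset (Finset (Finset (Fin n)))),
            (-1 : ℝ) ^ (ℓ - 1) * (Nat.factorial (ℓ - 1) : ℝ) *
              (((partitionsInto n ℓ).filter (fun D => Fam ⊆ T D)).card : ℝ) *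
              ∏ I ∈ Fam, ϱ I := by
      intro ℓ hℓ
      rw [Finset.sum_congr rfl (fun D hD => expand hD)]
      have : ∀ D ∈ partitionsInto n ℓ,
          ∑ Fam ∈ (T D).powerset, ∏ I ∈ Fam, ϱ I
          = ∑ Fam ∈ (Finset.univ : Finset (Finset (Finset (Fin n)))),
              if Fam ⊆ T D then ∏ I ∈ Fam, ϱ I else 0 := by
        intro D hD
        rw [powerset_eq D, Finset.sum_filter]
      rw [Finset.sum_congr rfl this, Finset.mul_sum]
      have push : ∀ D ∈ partitionsInto n ℓ,
          ((-1 : ℝ) ^ (ℓ - 1) * (Nat.factorial (ℓ - 1) : ℝ) *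
            ∑ Fam ∈ (Finset.univ : Finset (Finset (Finset (Fin n)))),
              (if Fam ⊆ T D then ∏ I ∈ Fam, ϱ I else 0))
          = ∑ Fam ∈ (Finset.univ : Finset (Finset (Finset (Fin n)))),
              (if Fam ⊆ T D then
                (-1 : ℝ) ^ (ℓ - 1) * (Nat.factorial (ℓ - 1) : ℝ) * ∏ I ∈ Fam, ϱ I else 0) := by
        intro D _
        rw [Finset.mul_sum]
        exact Finset.sum_congr rfl fun Fam _ => by split <;> ring
      rw [Finset.sum_congr rfl push, Finset.sum_comm]
      apply Finset.sum_congr rfl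
      intro Fam _
      rw [← Finset.sum_filter, Finset.sum_const, nsmul_eq_mul]
      ring
    rw [Finset.sum_congr rfl inner, Finset.sum_comm]
    apply Finset.sum_congr rfl
    intro Fam _
    rw [Finset.sum_mul]
  rw [lhs_eq, Finset.sum_filter]
  -- Step 3: termwise identification of the coefficient
  apply Finset.sum_congr rfl
  intro Fam _
  by_cases hemp : ∅ ∈ Fam
  · -- the product vanishes
    have hprod : ∏ I ∈ Fam, ϱ I = 0 := Finset.prod_eq_zero hemp h0
    rw [hprod, mul_zero]
    split <;> rfl
  · have hFamne : ∀ I ∈ Fam, I.Nonempty :=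
      fun I hI => Finset.nonempty_iff_ne_empty.mpr (fun h => hemp (h ▸ hI))
    -- the subset condition is the compatibility condition
    have hfilter_eq : ∀ ℓ : ℕ, (partitionsInto n ℓ).filter (fun D => Fam ⊆ T D)
        = (partitionsInto n ℓ).filter
            (fun D => ∀ c ∈ Cancel.comps Fam, ∃ B ∈ D, c ⊆ B) := by
      intro ℓ
      apply Finset.filter_congr
      intro D hD
      have hsub : Fam ⊆ T D ↔ ∀ I ∈ Fam, ∃ B ∈ D, I ⊆ B := by
        constructor
        · intro h I hI
          have := h hI
          rw [hT] at this
          simp only [Finset.mem_biUnion, Finset.mem_erase, Finset.mem_powerset] at this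
          obtain ⟨B, hB, -, hIB⟩ := this
          exact ⟨B, hB, hIB⟩
        · intro h I hI
          obtain ⟨B, hB, hIB⟩ := h I hI
          rw [hT]
          simp only [Finset.mem_biUnion, Finset.mem_erase, Finset.mem_powerset]
          exact ⟨B, hB, Finset.nonempty_iff_ne_empty.mp (hFamne I hI), hIB⟩
      simp only [hsub, Cancel.compat_iff hFamne hD]
    have hcomps_ne : ∀ c ∈ Cancel.comps Fam, c.Nonempty := fun c hc => Cancel.comps_nonempty hc
    have hcomps_disj : ∀ c ∈ Cancel.comps Fam, ∀ c' ∈ Cancel.comps Fam, c ≠ c' → Disjoint c c' :=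
      fun c hc c' hc' h => Cancel.comps_disjoint hc hc' h
    have hcomps_sup : (Cancel.comps Fam).sup id = Finset.univ := Cancel.comps_sup
    have hcount : ∀ ℓ : ℕ, (((partitionsInto n ℓ).filter (fun D => Fam ⊆ T D)).card : ℝ)
        = (Cancel.st (Cancel.comps Fam).card ℓ : ℝ) := by
      intro ℓ
      rw [hfilter_eq ℓ, Cancel.card_compat ℓ hcomps_ne hcomps_disj hcomps_sup,
        Cancel.card_parts]
    have hm1 : 1 ≤ (Cancel.comps Fam).card := by
      rw [Nat.one_le_iff_ne_zero, ← Nat.pos_iff_ne_zero, Finset.card_pos]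
      refine ⟨Cancel.comp Fam ⟨0, by omega⟩, ?_⟩
      exact Finset.mem_image.mpr ⟨⟨0, by omega⟩, Finset.mem_univ _, rfl⟩
    have hmn : (Cancel.comps Fam).card ≤ n := by
      calc (Cancel.comps Fam).card ≤ (Finset.univ : Finset (Fin n)).card :=
            Finset.card_image_le
        _ = n := by simp
    rw [Finset.sum_congr rfl (fun ℓ _ => by rw [hcount ℓ])]
    rw [Cancel.st_alt_sum hm1 hmn]
    have hiff := Cancel.card_comps_eq_one_iff (Fam := Fam) hn hemp
    by_cases hcond : Fam.sup id = Finset.univ ∧ FamConnected Fam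
    · have hne : Fam.Nonempty := by
        rcases Finset.eq_empty_or_nonempty Fam with rfl | h
        · exfalso
          have h1 := hcond.1
          rw [Finset.sup_empty] at h1
          have : (⟨0, by omega⟩ : Fin n) ∈ (⊥ : Finset (Fin n)) := by
            rw [h1]; exact Finset.mem_univ _
          exact Finset.notMem_empty _ this
        · exact h
      rw [if_pos (hiff.mpr hcond), if_pos ⟨hne, hcond⟩, one_mul]
    · rw [if_neg (fun h => hcond (hiff.mp h)), if_neg (fun h => hcond ⟨h.2.1, h.2.2⟩), zero_mul]
end

section
/- Let {I_1,…,I_k} be a family of distinct subsets of N = {1,…,n}, decomposed into h maximal connected components 𝒞_1,…,𝒞_h with supports C̃_m := ∪_{I ∈ 𝒞_m} I of cardinalities c_m. Then ∑_{ℓ=1}^{n} (-1)^{ℓ-1}(ℓ-1)! · |{partitions D of N into ℓ atoms such that for each m there exists an atom of D containing C̃_m}| = ∑_{ℓ=1}^{n} (-1)^{ℓ-1}(ℓ-1)! · d^ℓ_{n+h-(c_1+⋯+c_h)}, where d^ℓ_m is the Stirling number of the second kind. -/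
open Finset

/-- Stirling number of the second kind. -/
noncomputable def stirling2 (n ℓ : ℕ) : ℕ := (partitionsInto n ℓ).card

lemma mem_partitionsInto {n ℓ : ℕ} {P : Finset (Finset (Fin n))} :
    P ∈ partitionsInto n ℓ ↔ P.card = ℓ ∧ (∀ B ∈ P, B.Nonempty) ∧
      (∀ B ∈ P, ∀ B' ∈ P, B ≠ B' → Disjoint B B') ∧ P.sup id = Finset.univ := by
  simp [partitionsInto]

open Classical in
lemma key_card (n h : ℕ) (hn : n ≠ 0) (T : Fin h → Finset (Fin n))
    (hTne : ∀ m, (T m).Nonempty)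
    (hTdisj : ∀ m m', m ≠ m' → Disjoint (T m) (T m')) (ℓ : ℕ) :
    ((partitionsInto n ℓ).filter (fun D => ∀ m, ∃ B ∈ D, T m ⊆ B)).card =
      stirling2 (n + h - ∑ m, (T m).card) ℓ := by
  classical
  set S : Finset (Fin n) := Finset.univ.biUnion T with hS
  have hmemS : ∀ x : Fin n, x ∈ S ↔ ∃ m, x ∈ T m := by
    intro x; simp [hS]
  have hScard : S.card = ∑ m, (T m).card := by
    rw [hS, Finset.card_biUnion]
    intro m _ m' _ hmm'; exact hTdisj m m' hmm'
  set r : Fin h → Fin n := fun m => (hTne m).choose with hrdef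
  have hrT : ∀ m, r m ∈ T m := fun m => (hTne m).choose_spec
  have hrinj : Function.Injective r := by
    intro m m' hmm'
    by_contra hne'
    exact (Finset.disjoint_left.mp (hTdisj m m' hne')) (hrT m) (hmm' ▸ hrT m')
  set K : Finset (Fin n) := (Finset.univ \ S) ∪ Finset.univ.image r with hK
  have hrK : ∀ m, r m ∈ K := fun m => by
    rw [hK]; exact Finset.mem_union_right _ (Finset.mem_image_of_mem r (Finset.mem_univ m))
  have hnotS : ∀ x : Fin n, x ∉ S → x ∈ K := fun x hx =>
    Finset.mem_union.mpr (Or.inl (Finset.mem_sdiff.mpr ⟨Finset.mem_univ x, hx⟩))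
  have hKT : ∀ x ∈ K, ∀ m, x ∈ T m → x = r m := by
    intro x hx m hxm
    rcases Finset.mem_union.mp hx with hx' | hx'
    · exact absurd ((hmemS x).mpr ⟨m, hxm⟩) (Finset.mem_sdiff.mp hx').2
    · rcases Finset.mem_image.mp hx' with ⟨m', _, rfl⟩
      rcases eq_or_ne m' m with rfl | hmm'
      · rfl
      · exact absurd hxm (Finset.disjoint_left.mp (hTdisj m' m hmm') (hrT m'))
  have hSsub : S.card ≤ n := by
    have := Finset.card_le_univ S
    simpa using this
  have hKcard : K.card = n + h - ∑ m, (T m).card := by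
    have hdisjK : Disjoint (Finset.univ \ S) (Finset.univ.image r) := by
      rw [Finset.disjoint_left]
      intro x hx hx'
      rcases Finset.mem_image.mp hx' with ⟨m, _, rfl⟩
      exact (Finset.mem_sdiff.mp hx).2 ((hmemS _).mpr ⟨m, hrT m⟩)
    rw [hK, Finset.card_union_of_disjoint hdisjK, Finset.card_sdiff_of_subset (Finset.subset_univ S),
      Finset.card_image_of_injective _ hrinj, Finset.card_univ, Fintype.card_fin,
      Finset.card_univ, Fintype.card_fin, ← hScard]
    omega
  set N' := n + h - ∑ m, (T m).card with hN'
  have hKN' : K.card = N' := hKcard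
  have hKne : K.Nonempty := by
    have hx0 : (⟨0, Nat.pos_of_ne_zero hn⟩ : Fin n) = ⟨0, Nat.pos_of_ne_zero hn⟩ := rfl
    set x : Fin n := ⟨0, Nat.pos_of_ne_zero hn⟩
    by_cases hx : x ∈ S
    · rcases (hmemS x).mp hx with ⟨m, _⟩
      exact ⟨r m, hrK m⟩
    · exact ⟨x, hnotS x hx⟩
  obtain ⟨k0, hk0⟩ := hKne
  set e : {x // x ∈ K} ≃ Fin N' := K.equivFinOfCardEq hKN' with he
  set g : Fin n → Fin N' := fun x => if hx : x ∈ K then e ⟨x, hx⟩ else e ⟨k0, hk0⟩ with hg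
  set g' : Fin N' → Fin n := fun y => (e.symm y : Fin n) with hg'
  have hg'K : ∀ y, g' y ∈ K := fun y => (e.symm y).2
  have hgg' : ∀ y, g (g' y) = y := by
    intro y
    show (if hx : g' y ∈ K then e ⟨g' y, hx⟩ else e ⟨k0, hk0⟩) = y
    rw [dif_pos (hg'K y)]
    exact (congrArg e (Subtype.ext rfl)).trans (Equiv.apply_symm_apply e y)
  have hg'g : ∀ x ∈ K, g' (g x) = x := by
    intro x hx
    show (↑(e.symm (if hx' : x ∈ K then e ⟨x, hx'⟩ else e ⟨k0, hk0⟩)) : Fin n) = x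
    rw [dif_pos hx, Equiv.symm_apply_apply]
  have himg : ∀ A : Finset (Fin n), A ⊆ K → (A.image g).image g' = A := by
    intro A hA
    rw [Finset.image_image]
    ext x
    simp only [Finset.mem_image, Function.comp]
    constructor
    · rintro ⟨a, ha, rfl⟩; rwa [hg'g a (hA ha)]
    · intro hx; exact ⟨x, hx, hg'g x (hA hx)⟩
  have himg' : ∀ Q : Finset (Fin N'), (Q.image g').image g = Q := by
    intro Q
    rw [Finset.image_image]
    ext y
    simp only [Finset.mem_image, Function.comp]
    constructor
    · rintro ⟨a, ha, rfl⟩; rw [hgg' a]; exact ha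
    · intro hy; exact ⟨y, hy, hgg' y⟩
  have habs : ∀ D, D ∈ partitionsInto n ℓ → (∀ m, ∃ B ∈ D, T m ⊆ B) →
      ∀ B ∈ D, ∀ m, ∀ x, x ∈ B → x ∈ T m → T m ⊆ B := by
    intro D hD hcond B hB m x hxB hxT
    obtain ⟨_, _, hdisjD, _⟩ := mem_partitionsInto.mp hD
    obtain ⟨B', hB', hTB'⟩ := hcond m
    rcases eq_or_ne B B' with rfl | hne'
    · exact hTB'
    · exact absurd (hTB' hxT) (fun hc =>
        (Finset.disjoint_left.mp (hdisjD B hB B' hB' hne') hxB) hc)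
  have hdet : ∀ D, D ∈ partitionsInto n ℓ → (∀ m, ∃ B ∈ D, T m ⊆ B) →
      ∀ D', D' ∈ partitionsInto n ℓ → (∀ m, ∃ B ∈ D', T m ⊆ B) →
      ∀ B ∈ D, ∀ B' ∈ D', B ∩ K = B' ∩ K → B ⊆ B' := by
    intro D hD hcD D' hD' hcD' B hB B' hB' hKeq x hxB
    by_cases hxS : x ∈ S
    · rcases (hmemS x).mp hxS with ⟨m, hxm⟩
      have hTB : T m ⊆ B := habs D hD hcD B hB m x hxB hxm
      have hrB : r m ∈ B ∩ K := Finset.mem_inter.mpr ⟨hTB (hrT m), hrK m⟩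
      rw [hKeq] at hrB
      exact habs D' hD' hcD' B' hB' m (r m) (Finset.mem_inter.mp hrB).1 (hrT m) hxm
    · have hx : x ∈ B ∩ K := Finset.mem_inter.mpr ⟨hxB, hnotS x hxS⟩
      rw [hKeq] at hx
      exact (Finset.mem_inter.mp hx).1
  have hBK : ∀ D, D ∈ partitionsInto n ℓ → (∀ m, ∃ B ∈ D, T m ⊆ B) →
      ∀ B ∈ D, (B ∩ K).Nonempty := by
    intro D hD hcD B hB
    obtain ⟨_, hne', hdisjD, _⟩ := mem_partitionsInto.mp hD
    obtain ⟨x, hx⟩ := hne' B hB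
    by_cases hxS : x ∈ S
    · rcases (hmemS x).mp hxS with ⟨m, hxm⟩
      have hTB := habs D hD hcD B hB m x hx hxm
      exact ⟨r m, Finset.mem_inter.mpr ⟨hTB (hrT m), hrK m⟩⟩
    · exact ⟨x, Finset.mem_inter.mpr ⟨hx, hnotS x hxS⟩⟩
  rw [stirling2]
  apply Finset.card_bij (fun D _ => D.image (fun B => (B ∩ K).image g))
  -- maps into
  · intro D hDf
    obtain ⟨hD, hcD⟩ := Finset.mem_filter.mp hDf
    obtain ⟨hcard, hne', hdisjD, hsup⟩ := mem_partitionsInto.mp hD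
    have hikeq : ∀ B ∈ D, ∀ B' ∈ D, (B ∩ K).image g = (B' ∩ K).image g → B = B' := by
      intro B hB B' hB' heq
      have h1 : B ∩ K = B' ∩ K := by
        have h2 := congrArg (Finset.image g') heq
        rwa [himg _ Finset.inter_subset_right, himg _ Finset.inter_subset_right] at h2
      exact Finset.Subset.antisymm (hdet D hD hcD D hD hcD B hB B' hB' h1)
        (hdet D hD hcD D hD hcD B' hB' B hB h1.symm)
    refine mem_partitionsInto.mpr ⟨?_, ?_, ?_, ?_⟩
    · rw [Finset.card_image_of_injOn fun B hB B' hB' heq => hikeq B hB B' hB' heq]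
      exact hcard
    · intro Q hQ
      rcases Finset.mem_image.mp hQ with ⟨B, hB, rfl⟩
      exact (hBK D hD hcD B hB).image g
    · intro Q hQ Q' hQ' hQQ'
      rcases Finset.mem_image.mp hQ with ⟨B, hB, rfl⟩
      rcases Finset.mem_image.mp hQ' with ⟨B', hB', rfl⟩
      have hBB' : B ≠ B' := fun hbb => hQQ' (by rw [hbb])
      rw [Finset.disjoint_left]
      intro y hy hy'
      rcases Finset.mem_image.mp hy with ⟨a, ha, rfl⟩
      rcases Finset.mem_image.mp hy' with ⟨b, hb, hba⟩
      have haK : a ∈ K := (Finset.mem_inter.mp ha).2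
      have hbK : b ∈ K := (Finset.mem_inter.mp hb).2
      have hba' : b = a := by
        have h3 := congrArg g' hba
        rwa [hg'g b hbK, hg'g a haK] at h3
      subst hba'
      exact (Finset.disjoint_left.mp (hdisjD B hB B' hB' hBB') (Finset.mem_inter.mp ha).1)
        (Finset.mem_inter.mp hb).1
    · apply Finset.eq_univ_of_forall
      intro y
      have hxu : g' y ∈ D.sup id := by rw [hsup]; exact Finset.mem_univ _
      rcases Finset.mem_sup.mp hxu with ⟨B, hB, hxB⟩
      apply Finset.mem_sup.mpr
      refine ⟨(B ∩ K).image g, Finset.mem_image_of_mem _ hB, ?_⟩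
      have h4 : g (g' y) ∈ (B ∩ K).image g :=
        Finset.mem_image_of_mem g (Finset.mem_inter.mpr ⟨hxB, hg'K y⟩)
      rwa [hgg'] at h4
  -- injective
  · intro D hDf D' hDf' heq
    obtain ⟨hD, hcD⟩ := Finset.mem_filter.mp hDf
    obtain ⟨hD', hcD'⟩ := Finset.mem_filter.mp hDf'
    have hsub : ∀ E E', E ∈ partitionsInto n ℓ → (∀ m, ∃ B ∈ E, T m ⊆ B) →
        E' ∈ partitionsInto n ℓ → (∀ m, ∃ B ∈ E', T m ⊆ B) →
        E.image (fun B => (B ∩ K).image g) = E'.image (fun B => (B ∩ K).image g) →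
        E ⊆ E' := by
      intro E E' hE hcE hE' hcE' him B hB
      have : (B ∩ K).image g ∈ E'.image (fun B => (B ∩ K).image g) := by
        rw [← him]; exact Finset.mem_image_of_mem _ hB
      rcases Finset.mem_image.mp this with ⟨B', hB', heq'⟩
      have h1 : B' ∩ K = B ∩ K := by
        have h2 := congrArg (Finset.image g') heq'
        rwa [himg _ Finset.inter_subset_right, himg _ Finset.inter_subset_right] at h2
      have hBeq : B = B' :=
        Finset.Subset.antisymm (hdet E hE hcE E' hE' hcE' B hB B' hB' h1.symm)
          (hdet E' hE' hcE' E hE hcE B' hB' B hB h1)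
      rwa [hBeq]
    exact Finset.Subset.antisymm (hsub D D' hD hcD hD' hcD' heq)
      (hsub D' D hD' hcD' hD hcD heq.symm)
  -- surjective
  · intro P hP
    obtain ⟨hPcard, hPne, hPdisj, hPsup⟩ := mem_partitionsInto.mp hP
    set Ψ : Finset (Fin N') → Finset (Fin n) := fun Q =>
      Q.image g' ∪ (Finset.univ.filter (fun m => r m ∈ Q.image g')).biUnion T with hΨ
    have hΨmem : ∀ Q x, x ∈ Ψ Q ↔ x ∈ Q.image g' ∨ ∃ m, r m ∈ Q.image g' ∧ x ∈ T m := by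
      intro Q x
      rw [hΨ]
      simp [Finset.mem_union, Finset.mem_biUnion, Finset.mem_filter]
    have himgK : ∀ Q : Finset (Fin N'), Q.image g' ⊆ K := by
      intro Q x hx
      rcases Finset.mem_image.mp hx with ⟨y, _, rfl⟩
      exact hg'K y
    have hΨK : ∀ Q, Ψ Q ∩ K = Q.image g' := by
      intro Q
      apply Finset.Subset.antisymm
      · intro x hx
        obtain ⟨hx1, hx2⟩ := Finset.mem_inter.mp hx
        rcases (hΨmem Q x).mp hx1 with h | ⟨m, hm1, hm2⟩
        · exact h
        · rwa [hKT x hx2 m hm2]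
      · intro x hx
        exact Finset.mem_inter.mpr ⟨(hΨmem Q x).mpr (Or.inl hx), himgK Q hx⟩
    have hΨinj : ∀ Q ∈ P, ∀ Q' ∈ P, Ψ Q = Ψ Q' → Q = Q' := by
      intro Q _ Q' _ hqq
      have h1 : Q.image g' = Q'.image g' := by rw [← hΨK, ← hΨK, hqq]
      have h2 := congrArg (Finset.image g) h1
      rwa [himg' Q, himg' Q'] at h2
    have himgdisj : ∀ Q ∈ P, ∀ Q' ∈ P, Q ≠ Q' → Disjoint (Q.image g') (Q'.image g') := by
      intro Q hQ Q' hQ' hqq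
      rw [Finset.disjoint_left]
      intro a ha ha'
      rcases Finset.mem_image.mp ha with ⟨y, hy, rfl⟩
      rcases Finset.mem_image.mp ha' with ⟨y', hy', hyy⟩
      have : y' = y := by
        have := congrArg g hyy
        rwa [hgg', hgg'] at this
      subst this
      exact Finset.disjoint_left.mp (hPdisj Q hQ Q' hQ' hqq) hy hy'
    have hΨdisj : ∀ Q ∈ P, ∀ Q' ∈ P, Q ≠ Q' → Disjoint (Ψ Q) (Ψ Q') := by
      intro Q hQ Q' hQ' hqq
      rw [Finset.disjoint_left]
      intro x hx hx'
      rcases (hΨmem Q x).mp hx with h1 | ⟨m, hm1, hm2⟩ <;>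
        rcases (hΨmem Q' x).mp hx' with h2 | ⟨m', hm1', hm2'⟩
      · exact Finset.disjoint_left.mp (himgdisj Q hQ Q' hQ' hqq) h1 h2
      · -- x ∈ image g' Q, x ∈ T m' with r m' ∈ image g' Q'
        have hxr : x = r m' := hKT x (himgK Q h1) m' hm2'
        subst hxr
        exact Finset.disjoint_left.mp (himgdisj Q hQ Q' hQ' hqq) h1 hm1'
      · have hxr : x = r m := hKT x (himgK Q' h2) m hm2
        subst hxr
        exact Finset.disjoint_left.mp (himgdisj Q hQ Q' hQ' hqq) hm1 h2
      · have hmm : m = m' := by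
          by_contra hmm
          exact Finset.disjoint_left.mp (hTdisj m m' hmm) hm2 hm2'
        subst hmm
        exact Finset.disjoint_left.mp (himgdisj Q hQ Q' hQ' hqq) hm1 hm1'
    have hblock : ∀ x : Fin n, x ∈ K → ∃ Q ∈ P, x ∈ Q.image g' := by
      intro x hx
      have : g x ∈ P.sup id := by rw [hPsup]; exact Finset.mem_univ _
      rcases Finset.mem_sup.mp this with ⟨Q, hQ, hgx⟩
      refine ⟨Q, hQ, ?_⟩
      have := Finset.mem_image_of_mem g' hgx
      rwa [hg'g x hx] at this
    refine ⟨P.image Ψ, ?_, ?_⟩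
    · apply Finset.mem_filter.mpr
      constructor
      · refine mem_partitionsInto.mpr ⟨?_, ?_, ?_, ?_⟩
        · rw [Finset.card_image_of_injOn fun Q hQ Q' hQ' => hΨinj Q hQ Q' hQ']
          exact hPcard
        · intro B hB
          rcases Finset.mem_image.mp hB with ⟨Q, hQ, rfl⟩
          obtain ⟨y, hy⟩ := hPne Q hQ
          exact ⟨g' y, (hΨmem Q (g' y)).mpr (Or.inl (Finset.mem_image_of_mem g' hy))⟩
        · intro B hB B' hB' hbb
          rcases Finset.mem_image.mp hB with ⟨Q, hQ, rfl⟩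
          rcases Finset.mem_image.mp hB' with ⟨Q', hQ', rfl⟩
          exact hΨdisj Q hQ Q' hQ' (fun hc => hbb (by rw [hc]))
        · apply Finset.eq_univ_of_forall
          intro x
          apply Finset.mem_sup.mpr
          by_cases hxS : x ∈ S
          · rcases (hmemS x).mp hxS with ⟨m, hxm⟩
            rcases hblock (r m) (hrK m) with ⟨Q, hQ, hrm⟩
            exact ⟨Ψ Q, Finset.mem_image_of_mem Ψ hQ,
              (hΨmem Q x).mpr (Or.inr ⟨m, hrm, hxm⟩)⟩
          · rcases hblock x (hnotS x hxS) with ⟨Q, hQ, hxq⟩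
            exact ⟨Ψ Q, Finset.mem_image_of_mem Ψ hQ, (hΨmem Q x).mpr (Or.inl hxq)⟩
      · intro m
        rcases hblock (r m) (hrK m) with ⟨Q, hQ, hrm⟩
        refine ⟨Ψ Q, Finset.mem_image_of_mem Ψ hQ, ?_⟩
        intro x hx
        exact (hΨmem Q x).mpr (Or.inr ⟨m, hrm, hx⟩)
    · have hid : Finset.image ((fun B => (B ∩ K).image g) ∘ Ψ) P = Finset.image id P :=
        Finset.image_congr (fun Q hQ => by
          simp only [Function.comp, id]
          rw [hΨK Q, himg' Q])
      rw [Finset.image_image, hid, Finset.image_id]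

open Classical in
/-- Computation of the coefficient `a(I̲)`: for a family decomposed into `h`
connected components `𝒞_1, …, 𝒞_h` with pairwise disjoint supports
`C̃_m = ∪_{I ∈ 𝒞_m} I` of cardinalities `c_m`, the alternating sum over
partitions of `N` whose atoms absorb each support equals the corresponding
alternating sum of Stirling numbers `d^ℓ_{n+h-(c_1+⋯+c_h)}`. -/
theorem coefficient_computation (n h : ℕ) (𝒞 : Fin h → Finset (Finset (Fin n)))
    (hconn : ∀ m, FamConnected (𝒞 m))
    (hdisj : ∀ m m', m ≠ m' → ∀ I ∈ 𝒞 m, ∀ J ∈ 𝒞 m', Disjoint I J)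
    (hne : ∀ m, (((𝒞 m).sup id : Finset (Fin n))).Nonempty) :
    ∑ ℓ ∈ Finset.Icc 1 n, (-1 : ℤ) ^ (ℓ - 1) * (Nat.factorial (ℓ - 1) : ℤ) *
        (((partitionsInto n ℓ).filter
            (fun D => ∀ m, ∃ B ∈ D, (𝒞 m).sup id ⊆ B)).card : ℤ) =
      ∑ ℓ ∈ Finset.Icc 1 n, (-1 : ℤ) ^ (ℓ - 1) * (Nat.factorial (ℓ - 1) : ℤ) *
        (stirling2 (n + h - ∑ m, ((𝒞 m).sup id : Finset (Fin n)).card) ℓ : ℤ) := by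
  classical
  rcases Nat.eq_zero_or_pos n with rfl | hn
  · simp
  · have hTdisj : ∀ m m', m ≠ m' →
        Disjoint ((𝒞 m).sup id : Finset (Fin n)) ((𝒞 m').sup id) := by
      intro m m' hmm'
      rw [Finset.disjoint_left]
      intro x hx hx'
      rcases Finset.mem_sup.mp hx with ⟨I, hI, hxI⟩
      rcases Finset.mem_sup.mp hx' with ⟨J, hJ, hxJ⟩
      exact Finset.disjoint_left.mp (hdisj m m' hmm' I hI J hJ) hxI hxJ
    refine Finset.sum_congr rfl fun ℓ _ => ?_
    rw [key_card n h hn.ne' (fun m => (𝒞 m).sup id) hne hTdisj ℓ]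
end

section
/- Let Λ_{i_0}, Λ_{i_1}, …, Λ_{i_k} be pairwise disjoint finite subsets of ℤ^d (k ≥ 1), and let T(I) be the minimal size 𝕋({x_0,…,x_k}) over all choices x_h ∈ Λ_{i_h} of the Steiner tree number in the graph (ℤ^d, 𝔼) with sup-distance edges. Then T(I) ≥ (1/2) · min over permutations π of {0,…,k} fixing 0 of ∑_{l=1}^{k} d(Λ_{i_{π(l-1)}}, Λ_{i_{π(l)}}), where d(A,B) is the sup-distance between sets. -/
/-- The sup-distance `d(x,y) = max_i |x_i - y_i|` on `ℤ^d`. -/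
def supDist {d : ℕ} (x y : Fin d → ℤ) : ℕ :=
  Finset.univ.sup fun i => (x i - y i).natAbs

/-- Steiner tree number of a finite set `X ⊂ ℤ^d`: the minimal number of edges
of a connected subgraph of the lattice graph (with sup-distance-1 edges)
whose vertex set contains `X`. -/
noncomputable def steiner {d : ℕ} (X : Finset (Fin d → ℤ)) : ℕ :=
  sInf {m : ℕ |
    ∃ (V : Finset (Fin d → ℤ)) (E : Finset (Sym2 (Fin d → ℤ))),
      (∀ e ∈ E, ∃ u v, e = s(u, v) ∧ u ∈ V ∧ v ∈ V ∧ supDist u v = 1) ∧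
      (∀ a ∈ V, ∀ b ∈ V, Relation.ReflTransGen (fun u v => s(u, v) ∈ E) a b) ∧
      X ⊆ V ∧ E.card = m}

/-- Sup-distance between two finite nonempty sets. -/
noncomputable def setDist {d : ℕ} (A B : Finset (Fin d → ℤ)) : ℕ :=
  sInf {m : ℕ | ∃ a ∈ A, ∃ b ∈ B, supDist a b = m}

/-! ### Auxiliary lemmas on `supDist` -/

lemma coord_le_supDist {d : ℕ} (x y : Fin d → ℤ) (i : Fin d) :
    (x i - y i).natAbs ≤ supDist x y :=
  Finset.le_sup (f := fun i => (x i - y i).natAbs) (Finset.mem_univ i)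

lemma supDist_self {d : ℕ} (x : Fin d → ℤ) : supDist x x = 0 := by
  simp [supDist]

lemma supDist_comm {d : ℕ} (x y : Fin d → ℤ) : supDist x y = supDist y x := by
  unfold supDist
  congr 1; funext i; rw [← Int.natAbs_neg]; ring_nf

lemma supDist_eq_zero {d : ℕ} {x y : Fin d → ℤ} (h : supDist x y = 0) : x = y := by
  funext i
  have := Finset.sup_le_iff.mp h.le i (Finset.mem_univ i)
  omega

lemma supDist_triangle {d : ℕ} (x y z : Fin d → ℤ) :
    supDist x z ≤ supDist x y + supDist y z := by
  apply Finset.sup_le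
  intro i _
  have h1 := coord_le_supDist x y i
  have h2 := coord_le_supDist y z i
  have : (x i - z i).natAbs ≤ (x i - y i).natAbs + (y i - z i).natAbs := by
    have := Int.natAbs_add_le (x i - y i) (y i - z i)
    simpa using this
  omega

/-! ### Lattice paths: `steiner`'s defining set is nonempty -/

/-- One step from `p` towards `q`. -/
def stepTo {d : ℕ} (p q : Fin d → ℤ) : Fin d → ℤ := fun i => p i + (q i - p i).sign

lemma supDist_stepTo {d : ℕ} {p q : Fin d → ℤ} (h : p ≠ q) : supDist p (stepTo p q) = 1 := by
  have hne : ∃ i, p i ≠ q i := by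
    by_contra hc; push_neg at hc; exact h (funext hc)
  obtain ⟨i, hi⟩ := hne
  apply le_antisymm
  · apply Finset.sup_le
    intro j _
    simp only [stepTo]
    have : (p j - (p j + (q j - p j).sign)) = -(q j - p j).sign := by ring
    rw [this, Int.natAbs_neg]
    simp [Int.natAbs_sign]; split <;> omega
  · refine le_trans ?_ (coord_le_supDist p (stepTo p q) i)
    simp only [stepTo]
    have hzq : q i - p i ≠ 0 := by omega
    have : (p i - (p i + (q i - p i).sign)) = -(q i - p i).sign := by ring
    rw [this, Int.natAbs_neg]
    simp [Int.natAbs_sign, hzq]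

lemma supDist_stepTo_lt {d : ℕ} {p q : Fin d → ℤ} :
    supDist (stepTo p q) q ≤ supDist p q - 1 := by
  apply Finset.sup_le
  intro i _
  have hle := coord_le_supDist p q i
  simp only [stepTo]
  rcases lt_trichotomy (q i - p i) 0 with h1 | h1 | h1
  · rw [Int.sign_eq_neg_one_of_neg h1]; omega
  · have : q i = p i := by omega
    simp [this]
  · rw [Int.sign_eq_one_of_pos h1]; omega

/-- A lattice path from `p` to `q` (with `n` a fuel parameter). -/
def pathTo {d : ℕ} : ℕ → (Fin d → ℤ) → (Fin d → ℤ) → List (Fin d → ℤ)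
  | 0, p, _ => [p]
  | n + 1, p, q => if p = q then [p] else p :: pathTo n (stepTo p q) q

lemma pathTo_ne_nil {d : ℕ} (n : ℕ) (p q : Fin d → ℤ) : pathTo n p q ≠ [] := by
  cases n with
  | zero => simp [pathTo]
  | succ n => simp only [pathTo]; split <;> simp

lemma pathTo_head {d : ℕ} (n : ℕ) (p q : Fin d → ℤ) : (pathTo n p q).head? = some p := by
  cases n with
  | zero => rfl
  | succ n => simp only [pathTo]; split <;> rfl

lemma pathTo_spec {d : ℕ} : ∀ (n : ℕ) (p q : Fin d → ℤ), supDist p q ≤ n →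
    (pathTo n p q).Chain' (fun u v => supDist u v = 1) ∧ (pathTo n p q).getLast? = some q := by
  intro n
  induction n with
  | zero =>
    intro p q h
    have : p = q := supDist_eq_zero (Nat.le_zero.mp h)
    subst this
    exact ⟨List.isChain_singleton p, rfl⟩
  | succ n ih =>
    intro p q h
    by_cases hpq : p = q
    · subst hpq
      simp [pathTo, List.Chain', List.isChain_singleton]
    · have hlt : supDist (stepTo p q) q ≤ n := by
        have := @supDist_stepTo_lt d p q
        have hpos : supDist p q ≠ 0 := fun hc => hpq (supDist_eq_zero hc)
        omega
      obtain ⟨hc, hl⟩ := ih (stepTo p q) q hlt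
      simp only [pathTo, if_neg hpq]
      constructor
      · unfold List.Chain'; rw [List.isChain_cons]
        refine ⟨?_, hc⟩
        intro y hy
        rw [pathTo_head] at hy
        cases hy
        exact supDist_stepTo hpq
      · rw [List.getLast?_cons]; simp [hl]

/-! ### Walks along lists of edges -/

/-- The list of edges of consecutive elements of a list. -/
def listEdges {α : Type*} : List α → List (Sym2 α)
  | [] => []
  | [_] => []
  | a :: b :: t => s(a, b) :: listEdges (b :: t)

lemma listEdges_spec {α : Type*} {P : α → α → Prop} :
    ∀ {L : List α}, L.Chain' P → ∀ e ∈ listEdges L,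
      ∃ u v, e = s(u, v) ∧ P u v ∧ u ∈ L ∧ v ∈ L
  | [], _, e, he => by simp [listEdges] at he
  | [_], _, e, he => by simp [listEdges] at he
  | a :: b :: t, h, e, he => by
    unfold List.Chain' at h; rw [List.isChain_cons_cons] at h
    rcases (List.mem_cons).mp he with rfl | he'
    · exact ⟨a, b, rfl, h.1, by simp, by simp⟩
    · obtain ⟨u, v, h1, h2, h3, h4⟩ := listEdges_spec h.2 e he'
      exact ⟨u, v, h1, h2, List.mem_cons_of_mem _ h3, List.mem_cons_of_mem _ h4⟩

lemma chain'_mem_listEdges {α : Type*} :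
    ∀ (L : List α), L.Chain' (fun u v => s(u, v) ∈ listEdges L)
  | [] => List.isChain_nil
  | [a] => List.isChain_singleton a
  | a :: b :: t => by
    unfold List.Chain'; rw [List.isChain_cons_cons]
    refine ⟨by simp [listEdges], ?_⟩
    exact (chain'_mem_listEdges (b :: t)).imp
      (fun u v huv => by simp only [listEdges]; exact List.mem_cons_of_mem _ huv)

/-- Everything in a walk is reachable from the head. -/
lemma reach_head {α : Type*} {E : Finset (Sym2 α)} :
    ∀ (L : List α), L.Chain' (fun u v => s(u, v) ∈ E) → ∀ (a : α), L.head? = some a →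
      ∀ v ∈ L, Relation.ReflTransGen (fun u v => s(u, v) ∈ E) a v := by
  intro L
  induction L with
  | nil => intro _ a ha; simp at ha
  | cons b t ih =>
    intro h a ha v hv
    cases ha
    rcases List.mem_cons.mp hv with rfl | hv'
    · exact .refl
    · cases t with
      | nil => simp at hv'
      | cons c t' =>
        unfold List.Chain' at h; rw [List.isChain_cons_cons] at h
        exact .head h.1 (ih h.2 c rfl v hv')

/-- Sup-distance between entries of a walk is at most the index difference. -/
lemma walk_dist {d : ℕ} {L : List (Fin d → ℤ)}
    (hL : L.Chain' (fun u v => supDist u v ≤ 1)) :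
    ∀ (n i : ℕ) (h : i + n < L.length), supDist (L.get ⟨i, by omega⟩) (L.get ⟨i + n, h⟩) ≤ n := by
  intro n
  induction n with
  | zero => intro i h; simp [supDist_self]
  | succ n ih =>
    intro i h
    have h1 : i + n < L.length := by omega
    have h2 := ih i h1
    have h3 : i + n < L.length - 1 := by omega
    have h4 : supDist (L.get ⟨i + n, h1⟩) (L.get ⟨i + n + 1, by omega⟩) ≤ 1 :=
      List.isChain_iff_getElem.mp hL (i + n) (by omega)
    show supDist (L.get ⟨i, by omega⟩) (L.get ⟨i + n + 1, by omega⟩) ≤ n + 1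
    calc supDist (L.get ⟨i, by omega⟩) (L.get ⟨i + n + 1, by omega⟩)
        ≤ supDist (L.get ⟨i, by omega⟩) (L.get ⟨i + n, h1⟩) +
          supDist (L.get ⟨i + n, h1⟩) (L.get ⟨i + n + 1, by omega⟩) := supDist_triangle _ _ _
      _ ≤ n + 1 := by omega

/-! ### The closed tour of a connected graph -/

/-- A connected graph with at most `n` edges has a closed walk from any vertex
covering all vertices, of length at most `2·(#edges)+1`. -/
lemma tour {α : Type*} [DecidableEq α] :
    ∀ (n : ℕ) (E : Finset (Sym2 α)) (V : Finset α) (a : α), E.card ≤ n → a ∈ V →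
    (∀ e ∈ E, ∃ u v, e = s(u, v) ∧ u ∈ V ∧ v ∈ V) →
    (∀ u ∈ V, ∀ v ∈ V, Relation.ReflTransGen (fun p q => s(p, q) ∈ E) u v) →
    ∃ L : List α, L.head? = some a ∧ L.getLast? = some a ∧
      L.Chain' (fun u v => s(u, v) ∈ E) ∧ (∀ v ∈ V, v ∈ L) ∧
      L.length ≤ 2 * E.card + 1 := by
  intro n
  induction n with
  | zero =>
    intro E V a hcard ha hE hconn
    have hE0 : E = ∅ := Finset.card_eq_zero.mp (Nat.le_zero.mp hcard)
    subst hE0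
    refine ⟨[a], rfl, rfl, List.isChain_singleton a, ?_, by simp⟩
    intro v hv
    have hva : v = a := by
      have h := hconn a ha v hv
      induction h with
      | refl => rfl
      | tail _ h2 _ => simp at h2
    simp [hva]
  | succ n ih =>
    intro E V a hcard ha hE hconn
    classical
    by_cases hall : ∀ v ∈ V, v = a
    · refine ⟨[a], rfl, rfl, List.isChain_singleton a, ?_, by simp⟩
      intro v hv; simp [hall v hv]
    · push_neg at hall
      obtain ⟨b, hb, hba⟩ := hall
      have hab := hconn a ha b hb
      have hstep : ∃ c, s(a, c) ∈ E ∧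
          Relation.ReflTransGen (fun p q => s(p, q) ∈ E) c b := by
        rcases Relation.ReflTransGen.cases_head hab with rfl | ⟨c, hac, hcb⟩
        · exact absurd rfl hba
        · exact ⟨c, hac, hcb⟩
      obtain ⟨c, hac, -⟩ := hstep
      have hcV : c ∈ V := by
        obtain ⟨u, v, huv, hu, hv⟩ := hE _ hac
        rcases Sym2.eq_iff.mp huv with ⟨rfl, rfl⟩ | ⟨rfl, rfl⟩
        · exact hv
        · exact hu
      set E' : Finset (Sym2 α) := E.erase s(a, c) with hE'def
      have hE1 : 1 ≤ E.card := Finset.card_pos.mpr ⟨_, hac⟩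
      have hE'card : E'.card = E.card - 1 := Finset.card_erase_of_mem hac
      have hE'sub : E' ⊆ E := Finset.erase_subset _ _
      set R' : α → α → Prop := fun p q => s(p, q) ∈ E' with hR'def
      have hsymm : Symmetric R' := by
        intro p q h; simpa [R', Sym2.eq_swap] using h
      have split : ∀ v, Relation.ReflTransGen (fun p q => s(p, q) ∈ E) a v →
          Relation.ReflTransGen R' a v ∨ Relation.ReflTransGen R' c v := by
        intro v hv
        induction hv with
        | refl => exact Or.inl .refl
        | @tail w v _ hwv ihv =>
          by_cases hwe : s(w, v) = s(a, c)
          · rcases Sym2.eq_iff.mp hwe with ⟨rfl, rfl⟩ | ⟨rfl, rfl⟩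
            · exact Or.inr .refl
            · exact Or.inl .refl
          · have hmem : R' w v := Finset.mem_erase.mpr ⟨hwe, hwv⟩
            rcases ihv with h | h
            · exact Or.inl (h.tail hmem)
            · exact Or.inr (h.tail hmem)
      by_cases hbridge : Relation.ReflTransGen R' a c
      · -- not a bridge: `E'` still connects `V`
        have haall : ∀ u ∈ V, Relation.ReflTransGen R' a u := by
          intro u hu
          rcases split u (hconn a ha u hu) with h | h
          · exact h
          · exact hbridge.trans h
        have hconn' : ∀ u ∈ V, ∀ v ∈ V, Relation.ReflTransGen R' u v := by
          intro u hu v hv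
          exact ((haveI : Std.Symm R' := ⟨fun _ _ h => hsymm h⟩; Std.Symm.symm _ _ (haall u hu))).trans (haall v hv)
        have hE'end : ∀ e ∈ E', ∃ u v, e = s(u, v) ∧ u ∈ V ∧ v ∈ V :=
          fun e he => hE e (hE'sub he)
        obtain ⟨L, h1, h2, h3, h4, h5⟩ := ih E' V a (by omega) ha hE'end hconn'
        exact ⟨L, h1, h2, h3.imp (fun u v h => hE'sub h), h4, by omega⟩
      · -- bridge case: split into the component of `a` and the component of `c`
        have hnotac : ∀ v, Relation.ReflTransGen R' a v →
            Relation.ReflTransGen R' c v → False := by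
          intro v h1 h2
          exact hbridge (h1.trans ((haveI : Std.Symm R' := ⟨fun _ _ h => hsymm h⟩; Std.Symm.symm _ _ h2)))
        set Va : Finset α := V.filter (fun v => Relation.ReflTransGen R' a v) with hVadef
        set Vc : Finset α := V.filter (fun v => Relation.ReflTransGen R' c v) with hVcdef
        have haVa : a ∈ Va := Finset.mem_filter.mpr ⟨ha, .refl⟩
        have hcVc : c ∈ Vc := Finset.mem_filter.mpr ⟨hcV, .refl⟩
        set Ea : Finset (Sym2 α) := E'.filter (fun e => ∃ x ∈ e, Relation.ReflTransGen R' a x)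
          with hEadef
        set Ec : Finset (Sym2 α) := E'.filter
          (fun e => ¬ ∃ x ∈ e, Relation.ReflTransGen R' a x) with hEcdef
        have hcards : Ea.card + Ec.card = E'.card :=
          Finset.card_filter_add_card_filter_not _
        have hEaend : ∀ e ∈ Ea, ∃ u v, e = s(u, v) ∧ u ∈ Va ∧ v ∈ Va := by
          intro e he
          obtain ⟨heE', hx⟩ := Finset.mem_filter.mp he
          obtain ⟨u, v, rfl, hu, hv⟩ := hE _ (hE'sub heE')
          obtain ⟨x, hxe, hxa⟩ := hx
          have huv : Relation.ReflTransGen R' a u ∧ Relation.ReflTransGen R' a v := by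
            rcases Sym2.mem_iff.mp hxe with rfl | rfl
            · exact ⟨hxa, hxa.tail heE'⟩
            · exact ⟨hxa.tail (by simpa [R', Sym2.eq_swap] using heE'), hxa⟩
          exact ⟨u, v, rfl, Finset.mem_filter.mpr ⟨hu, huv.1⟩, Finset.mem_filter.mpr ⟨hv, huv.2⟩⟩
        have hEcend : ∀ e ∈ Ec, ∃ u v, e = s(u, v) ∧ u ∈ Vc ∧ v ∈ Vc := by
          intro e he
          obtain ⟨heE', hx⟩ := Finset.mem_filter.mp he
          obtain ⟨u, v, rfl, hu, hv⟩ := hE _ (hE'sub heE')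
          push_neg at hx
          have hua : ¬ Relation.ReflTransGen R' a u := hx u (Sym2.mem_mk_left u v)
          have hva : ¬ Relation.ReflTransGen R' a v := hx v (Sym2.mem_mk_right u v)
          have huc : Relation.ReflTransGen R' c u := by
            rcases split u (hconn a ha u hu) with h | h
            · exact absurd h hua
            · exact h
          have hvc : Relation.ReflTransGen R' c v := by
            rcases split v (hconn a ha v hv) with h | h
            · exact absurd h hva
            · exact h
          exact ⟨u, v, rfl, Finset.mem_filter.mpr ⟨hu, huc⟩, Finset.mem_filter.mpr ⟨hv, hvc⟩⟩
        have hreachEa : ∀ v, Relation.ReflTransGen R' a v →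
            Relation.ReflTransGen (fun p q => s(p, q) ∈ Ea) a v := by
          intro v hv
          induction hv with
          | refl => exact .refl
          | @tail w v hw hwv ihv =>
            have : s(w, v) ∈ Ea :=
              Finset.mem_filter.mpr ⟨hwv, ⟨w, Sym2.mem_mk_left w v, hw⟩⟩
            exact ihv.tail this
        have hsymmEa : Symmetric (fun p q => s(p, q) ∈ Ea) := by
          intro p q h; simpa [Sym2.eq_swap] using h
        have hconnA : ∀ u ∈ Va, ∀ v ∈ Va,
            Relation.ReflTransGen (fun p q => s(p, q) ∈ Ea) u v := by
          intro u hu v hv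
          have h1 := hreachEa u (Finset.mem_filter.mp hu).2
          have h2 := hreachEa v (Finset.mem_filter.mp hv).2
          exact ((haveI : Std.Symm (fun p q => s(p, q) ∈ Ea) := ⟨fun _ _ h => hsymmEa h⟩; Std.Symm.symm _ _ h1)).trans h2
        have hreachEc : ∀ v, Relation.ReflTransGen R' c v →
            Relation.ReflTransGen (fun p q => s(p, q) ∈ Ec) c v := by
          intro v hv
          induction hv with
          | refl => exact .refl
          | @tail w v hw hwv ihv =>
            have hmemEc : s(w, v) ∈ Ec := by
              refine Finset.mem_filter.mpr ⟨hwv, ?_⟩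
              rintro ⟨x, hxe, hxa⟩
              rcases Sym2.mem_iff.mp hxe with rfl | rfl
              · exact hnotac x hxa hw
              · exact hnotac x hxa (hw.tail hwv)
            exact ihv.tail hmemEc
        have hsymmEc : Symmetric (fun p q => s(p, q) ∈ Ec) := by
          intro p q h; simpa [Sym2.eq_swap] using h
        have hconnC : ∀ u ∈ Vc, ∀ v ∈ Vc,
            Relation.ReflTransGen (fun p q => s(p, q) ∈ Ec) u v := by
          intro u hu v hv
          have h1 := hreachEc u (Finset.mem_filter.mp hu).2
          have h2 := hreachEc v (Finset.mem_filter.mp hv).2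
          exact ((haveI : Std.Symm (fun p q => s(p, q) ∈ Ec) := ⟨fun _ _ h => hsymmEc h⟩; Std.Symm.symm _ _ h1)).trans h2
        have hEacard : Ea.card ≤ n := by omega
        have hEccard : Ec.card ≤ n := by omega
        obtain ⟨La, ha1, ha2, ha3, ha4, ha5⟩ := ih Ea Va a hEacard haVa hEaend hconnA
        obtain ⟨Lc, hc1, hc2, hc3, hc4, hc5⟩ := ih Ec Vc c hEccard hcVc hEcend hconnC
        have hEaE : Ea ⊆ E := fun e he => hE'sub (Finset.mem_filter.mp he).1
        have hEcE : Ec ⊆ E := fun e he => hE'sub (Finset.mem_filter.mp he).1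
        refine ⟨La ++ (Lc ++ [a]), ?_, ?_, ?_, ?_, ?_⟩
        · cases La with
          | nil => simp at ha1
          | cons x t => cases ha1; rfl
        · rw [List.getLast?_append]
          simp [List.getLast?_concat]
        · refine List.IsChain.append ?_ (List.IsChain.append ?_ (List.isChain_singleton a) ?_) ?_
          · exact ha3.imp (fun u v h => hEaE h)
          · exact hc3.imp (fun u v h => hEcE h)
          · intro x hx y hy
            rw [hc2] at hx
            simp at hx hy
            subst hx; subst hy
            simpa [Sym2.eq_swap] using hac
          · intro x hx y hy
            rw [ha2] at hx
            simp at hx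
            subst hx
            cases Lc with
            | nil => simp at hc1
            | cons z t =>
              cases hc1
              simp at hy
              subst hy
              exact hac
        · intro v hv
          rcases split v (hconn a ha v hv) with h | h
          · exact List.mem_append_left _ (ha4 v (Finset.mem_filter.mpr ⟨hv, h⟩))
          · exact List.mem_append_right _
              (List.mem_append_left _ (hc4 v (Finset.mem_filter.mpr ⟨hv, h⟩)))
        · simp only [List.length_append, List.length_singleton]
          omega

/-! ### The defining set of `steiner` is nonempty -/

lemma steiner_set_nonempty {d k : ℕ} (x : Fin (k + 1) → (Fin d → ℤ)) :
    {m : ℕ |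
      ∃ (V : Finset (Fin d → ℤ)) (E : Finset (Sym2 (Fin d → ℤ))),
        (∀ e ∈ E, ∃ u v, e = s(u, v) ∧ u ∈ V ∧ v ∈ V ∧ supDist u v = 1) ∧
        (∀ a ∈ V, ∀ b ∈ V, Relation.ReflTransGen (fun u v => s(u, v) ∈ E) a b) ∧
        (Finset.image x Finset.univ) ⊆ V ∧ E.card = m}.Nonempty := by
  classical
  set P : Fin (k + 1) → List (Fin d → ℤ) :=
    fun h => pathTo (supDist (x 0) (x h)) (x 0) (x h) with hPdef
  have hPspec : ∀ h, (P h).Chain' (fun u v => supDist u v = 1) ∧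
      (P h).getLast? = some (x h) := fun h => pathTo_spec _ _ _ le_rfl
  set V : Finset (Fin d → ℤ) := Finset.univ.biUnion (fun h => (P h).toFinset) with hVdef
  set E : Finset (Sym2 (Fin d → ℤ)) :=
    Finset.univ.biUnion (fun h => (listEdges (P h)).toFinset) with hEdef
  have hmemV : ∀ (h : Fin (k + 1)) (v : Fin d → ℤ), v ∈ P h → v ∈ V := by
    intro h v hv
    exact Finset.mem_biUnion.mpr ⟨h, Finset.mem_univ h, List.mem_toFinset.mpr hv⟩
  refine ⟨E.card, V, E, ?_, ?_, ?_, rfl⟩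
  · intro e he
    obtain ⟨h, -, he⟩ := Finset.mem_biUnion.mp he
    rw [List.mem_toFinset] at he
    obtain ⟨u, v, rfl, hP, hu, hv⟩ := listEdges_spec (hPspec h).1 e he
    exact ⟨u, v, rfl, hmemV h u hu, hmemV h v hv, hP⟩
  · have key : ∀ v ∈ V, Relation.ReflTransGen (fun u v => s(u, v) ∈ E) (x 0) v := by
      intro v hv
      obtain ⟨h, -, hv⟩ := Finset.mem_biUnion.mp hv
      rw [List.mem_toFinset] at hv
      have hchain : (P h).Chain' (fun u v => s(u, v) ∈ E) := by
        exact (chain'_mem_listEdges (P h)).imp (fun u v huv =>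
          Finset.mem_biUnion.mpr ⟨h, Finset.mem_univ h, List.mem_toFinset.mpr huv⟩)
      exact reach_head (P h) hchain (x 0) (pathTo_head _ _ _) v hv
    intro a ha b hb
    have hsym : Symmetric (fun u v => s(u, v) ∈ E) := by
      intro u v h; simpa [Sym2.eq_swap] using h
    exact ((haveI : Std.Symm (fun u v => s(u, v) ∈ E) := ⟨fun _ _ h => hsym h⟩; Std.Symm.symm _ _ (key a ha))).trans (key b hb)
  · intro v hv
    obtain ⟨h, -, rfl⟩ := Finset.mem_image.mp hv
    apply hmemV h
    have hl := (hPspec h).2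
    cases hP : P h with
    | nil => rw [hP] at hl; simp at hl
    | cons z t =>
      rw [hP, List.getLast?_eq_getLast (by simp)] at hl
      have := List.getLast_mem (l := z :: t) (by simp)
      rwa [Option.some.inj hl] at this

/-! ### Main theorem -/

/-- Lemma 3.3: the minimal Steiner tree number `T(I)` connecting the pairwise
disjoint nonempty sets `Λ_{i_0}, …, Λ_{i_k}` is at least one half of the
minimum, over permutations `π` of `{0,…,k}` fixing `0`, of
`∑_{l=1}^k d(Λ_{i_{π(l-1)}}, Λ_{i_{π(l)}})`. -/
theorem steiner_lower_bound_by_path (d k : ℕ) (hk : 1 ≤ k)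
    (Λ : Fin (k + 1) → Finset (Fin d → ℤ))
    (hne : ∀ i, (Λ i).Nonempty)
    (hdisj : ∀ i j, i ≠ j → Disjoint (Λ i) (Λ j)) :
    sInf {s : ℕ | ∃ π : Equiv.Perm (Fin (k + 1)), π 0 = 0 ∧
        s = ∑ l : Fin k, setDist (Λ (π l.castSucc)) (Λ (π l.succ))} ≤
      2 * sInf {m : ℕ | ∃ x : Fin (k + 1) → (Fin d → ℤ),
        (∀ h, x h ∈ Λ h) ∧ steiner (Finset.image x Finset.univ) = m} := by
  classical
  have hQne : {m : ℕ | ∃ x : Fin (k + 1) → (Fin d → ℤ),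
      (∀ h, x h ∈ Λ h) ∧ steiner (Finset.image x Finset.univ) = m}.Nonempty :=
    ⟨steiner (Finset.image (fun h => (hne h).choose) Finset.univ),
      fun h => (hne h).choose, fun h => (hne h).choose_spec, rfl⟩
  obtain ⟨x, hx, hxm⟩ := Nat.sInf_mem hQne
  rw [← hxm]
  clear hxm hQne
  obtain ⟨V, E, hE, hconn, hXV, hcard0⟩ := Nat.sInf_mem (steiner_set_nonempty (d := d) x)
  have hcard : E.card = steiner (Finset.image x Finset.univ) := hcard0
  clear hcard0
  -- `x` is injective
  have hxinj : Function.Injective x := by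
    intro h1 h2 heq
    by_contra hne'
    exact Finset.disjoint_left.mp (hdisj h1 h2 hne') (hx h1) (heq ▸ hx h2)
  -- the tour
  have hx0V : x 0 ∈ V := hXV (Finset.mem_image.mpr ⟨0, Finset.mem_univ _, rfl⟩)
  have hEend : ∀ e ∈ E, ∃ u v, e = s(u, v) ∧ u ∈ V ∧ v ∈ V := by
    intro e he
    obtain ⟨u, v, h1, h2, h3, -⟩ := hE e he
    exact ⟨u, v, h1, h2, h3⟩
  obtain ⟨L, hL1, hL2, hL3, hL4, hL5⟩ := tour E.card E V (x 0) le_rfl hx0V hEend hconn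
  have hLd : L.Chain' (fun u v => supDist u v ≤ 1) := by
    refine hL3.imp (fun u v h => ?_)
    obtain ⟨u', v', huv, -, -, hd⟩ := hE _ h
    rcases Sym2.eq_iff.mp huv with ⟨rfl, rfl⟩ | ⟨rfl, rfl⟩
    · exact hd.le
    · rw [supDist_comm]; exact hd.le
  set f : Fin (k + 1) → ℕ := fun h => L.idxOf (x h) with hfdef
  have hmemL : ∀ h, x h ∈ L :=
    fun h => hL4 _ (hXV (Finset.mem_image.mpr ⟨h, Finset.mem_univ _, rfl⟩))
  have hflt : ∀ h, f h < L.length := fun h => List.idxOf_lt_length_iff.mpr (hmemL h)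
  have hfget : ∀ h, L.get ⟨f h, hflt h⟩ = x h := fun h => List.idxOf_get (hflt h)
  have hfinj : Function.Injective f := by
    intro h1 h2 he
    apply hxinj
    rw [← hfget h1, ← hfget h2]
    congr 1
    exact Fin.ext he
  have hf0 : f 0 = 0 := by
    cases L with
    | nil => simp at hL1
    | cons z t =>
      have : z = x 0 := by simpa using hL1
      subst this
      simp [hfdef]
  set π := Tuple.sort f with hπdef
  have hmono : Monotone (f ∘ π) := Tuple.monotone_sort f
  have hπ0 : π 0 = 0 := by
    have h1 : (f ∘ π) 0 ≤ (f ∘ π) (π.symm 0) := hmono (Fin.zero_le _)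
    simp only [Function.comp_apply, Equiv.apply_symm_apply] at h1
    apply hfinj
    rw [hf0]
    omega
  -- per-term bound
  have hterm : ∀ l : Fin k, setDist (Λ (π l.castSucc)) (Λ (π l.succ)) ≤
      f (π l.succ) - f (π l.castSucc) := by
    intro l
    have hfle : f (π l.castSucc) ≤ f (π l.succ) := hmono (Fin.castSucc_le_succ l)
    have h1 : setDist (Λ (π l.castSucc)) (Λ (π l.succ)) ≤
        supDist (x (π l.castSucc)) (x (π l.succ)) :=
      Nat.sInf_le ⟨_, hx _, _, hx _, rfl⟩
    have h2 : f (π l.castSucc) + (f (π l.succ) - f (π l.castSucc)) < L.length := by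
      have := hflt (π l.succ); omega
    have h3 := walk_dist hLd (f (π l.succ) - f (π l.castSucc)) (f (π l.castSucc)) h2
    have e2 : (⟨f (π l.castSucc) + (f (π l.succ) - f (π l.castSucc)), h2⟩ : Fin L.length) =
        ⟨f (π l.succ), hflt _⟩ := Fin.ext (by simp only [Fin.val_mk]; omega)
    rw [e2, hfget (π l.castSucc), hfget (π l.succ)] at h3
    omega
  -- telescoping
  set G : ℕ → ℕ := fun n => (f ∘ π) ⟨min n k, by omega⟩ with hGdef
  have hGmono : Monotone G := by
    intro a b hab
    apply hmono
    simp only [Fin.mk_le_mk]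
    exact min_le_min_right k hab
  have hsum2 : ∑ l : Fin k, (f (π l.succ) - f (π l.castSucc)) =
      ∑ i ∈ Finset.range k, (G (i + 1) - G i) := by
    rw [← Fin.sum_univ_eq_sum_range (fun i => G (i + 1) - G i) k]
    apply Finset.sum_congr rfl
    intro l _
    have h1 : G (↑l + 1) = f (π l.succ) := by
      simp only [hGdef, Function.comp_apply]
      congr 2
      · exact Fin.ext (by simp [Nat.min_eq_left (Nat.succ_le_of_lt l.isLt)])
    have h2 : G ↑l = f (π l.castSucc) := by
      simp only [hGdef, Function.comp_apply]
      congr 2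
      · exact Fin.ext (by simp [Nat.min_eq_left (le_of_lt l.isLt)])
    rw [h1, h2]
  have htel : ∑ i ∈ Finset.range k, (G (i + 1) - G i) = G k - G 0 :=
    Finset.sum_range_tsub hGmono k
  have hG0 : G 0 = 0 := by
    have : (⟨min 0 k, by omega⟩ : Fin (k + 1)) = 0 := Fin.ext (by simp)
    simp only [hGdef, Function.comp_apply, this, hπ0, hf0]
  have hGk : G k ≤ 2 * E.card := by
    have h1 : f (π ⟨min k k, by omega⟩) < L.length := hflt _
    simp only [hGdef, Function.comp_apply]
    omega
  -- conclude
  have hmem : (∑ l : Fin k, setDist (Λ (π l.castSucc)) (Λ (π l.succ))) ∈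
      {s : ℕ | ∃ π : Equiv.Perm (Fin (k + 1)), π 0 = 0 ∧
        s = ∑ l : Fin k, setDist (Λ (π l.castSucc)) (Λ (π l.succ))} := ⟨π, hπ0, rfl⟩
  refine le_trans (Nat.sInf_le hmem) ?_
  calc ∑ l : Fin k, setDist (Λ (π l.castSucc)) (Λ (π l.succ))
      ≤ ∑ l : Fin k, (f (π l.succ) - f (π l.castSucc)) :=
        Finset.sum_le_sum (fun l _ => hterm l)
    _ = G k - G 0 := by rw [hsum2, htel]
    _ ≤ 2 * E.card := by omega
    _ = 2 * steiner (Finset.image x Finset.univ) := by rw [hcard]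
end

section
/- Suppose for every finite X ⊆ ℤ^d intersecting each of the pairwise disjoint finite sets Λ_i, i ∈ I (|I| ≥ 2), one has T(I) ≤ (|I|-1)·diam(X) and T(I) ≤ 𝕋(X), where 𝕋(X) is the Steiner tree number and diam the sup-norm diameter. If sup_x ∑_{X ∋ x} e^{a𝕋(X) + b·diam(X)} ‖φ_X‖_∞ ≤ C for some a, b ≥ 0, then ∑_{X : X ∩ Λ_i ≠ ∅ ∀ i ∈ I} ‖φ_X‖_∞ ≤ C · (min_{i ∈ I} |Λ_i|) · exp{-(a + b/(|I|-1)) T(I)}. -/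
open Finset

/-- Sup-norm diameter of a finite subset of `ℤ^d`. -/
def latDiam {d : ℕ} (X : Finset (Fin d → ℤ)) : ℕ :=
  X.sup fun u => X.sup fun v => supDist u v

set_option maxHeartbeats 1000000 in
/-- The estimate of Lemma 3.2: if `T ≤ (|I|-1)·diam X` and `T ≤ 𝕋(X)` for every
`X` intersecting all of the pairwise disjoint nonempty finite sets `Λ_i`, and
`sup_x ∑_{X ∋ x} e^{a𝕋(X)+b·diam X} ‖φ_X‖ ≤ C`, then
`∑_{X : X∩Λ_i ≠ ∅ ∀i} ‖φ_X‖ ≤ C · min_i|Λ_i| · e^{-(a+b/(n-1))T}`. -/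
theorem weighted_potential_sum_bound (d n : ℕ) (hn : 2 ≤ n) (a b C T : ℝ)
    (ha : 0 ≤ a) (hb : 0 ≤ b)
    (Λ : Fin n → Finset (Fin d → ℤ))
    (hne : ∀ i, (Λ i).Nonempty)
    (hdisj : ∀ i j, i ≠ j → Disjoint (Λ i) (Λ j))
    (w : Finset (Fin d → ℤ) → ℝ) (hw : ∀ X, 0 ≤ w X)
    (hT : ∀ X : Finset (Fin d → ℤ), (∀ i, (X ∩ Λ i).Nonempty) →
      T ≤ ((n : ℝ) - 1) * latDiam X ∧ T ≤ steiner X)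
    (hsummable : ∀ x : Fin d → ℤ,
      Summable fun X : {X : Finset (Fin d → ℤ) // x ∈ X} =>
        Real.exp (a * steiner X.1 + b * latDiam X.1) * w X.1)
    (hC : ∀ x : Fin d → ℤ,
      ∑' X : {X : Finset (Fin d → ℤ) // x ∈ X},
        Real.exp (a * steiner X.1 + b * latDiam X.1) * w X.1 ≤ C) :
    ∑' X : {X : Finset (Fin d → ℤ) // ∀ i, (X ∩ Λ i).Nonempty}, w X.1 ≤
      C * (Finset.univ.inf' ⟨⟨0, by omega⟩, Finset.mem_univ _⟩
            fun i => ((Λ i).card : ℝ)) *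
        Real.exp (-(a + b / ((n : ℝ) - 1)) * T) := by
  classical
  have hn1 : (0:ℝ) < (n:ℝ) - 1 := by
    have : (2:ℝ) ≤ (n:ℝ) := by exact_mod_cast hn
    linarith
  set ε := Real.exp (-(a + b / ((n : ℝ) - 1)) * T) with hε
  obtain ⟨i₀, -, hi₀⟩ := Finset.exists_mem_eq_inf'
    (⟨⟨0, by omega⟩, Finset.mem_univ _⟩ : (Finset.univ : Finset (Fin n)).Nonempty)
    (fun i => ((Λ i).card : ℝ))
  -- the sigma type over points of Λ i₀
  set F : (Σ x : {x // x ∈ Λ i₀}, {X : Finset (Fin d → ℤ) // x.1 ∈ X}) → ℝ :=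
    fun σ => Real.exp (a * steiner σ.2.1 + b * latDiam σ.2.1) * w σ.2.1 with hF
  have hFnn : ∀ σ, 0 ≤ F σ := fun σ => mul_nonneg (Real.exp_nonneg _) (hw _)
  have hFsum : Summable F := by
    rw [summable_sigma_of_nonneg hFnn]
    exact ⟨fun x => hsummable x.1, Summable.of_finite⟩
  -- the injection
  set g : {X : Finset (Fin d → ℤ) // ∀ i, (X ∩ Λ i).Nonempty} →
      (Σ x : {x // x ∈ Λ i₀}, {X : Finset (Fin d → ℤ) // x.1 ∈ X}) :=
    fun X => ⟨⟨(X.2 i₀).choose, (Finset.mem_inter.mp (X.2 i₀).choose_spec).2⟩,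
      ⟨X.1, (Finset.mem_inter.mp (X.2 i₀).choose_spec).1⟩⟩ with hg
  have ginj : Function.Injective g := by
    intro X Y h
    have : (g X).2.1 = (g Y).2.1 := by rw [h]
    exact Subtype.ext this
  have hFg : Summable (F ∘ g) := hFsum.comp_injective ginj
  have key : ∀ X : {X : Finset (Fin d → ℤ) // ∀ i, (X ∩ Λ i).Nonempty},
      w X.1 ≤ ε * F (g X) := by
    intro X
    obtain ⟨hT1, hT2⟩ := hT X.1 X.2
    have h1 : (a + b / ((n:ℝ) - 1)) * T ≤ a * steiner X.1 + b * latDiam X.1 := by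
      have ha' : a * T ≤ a * steiner X.1 := mul_le_mul_of_nonneg_left hT2 ha
      have hb' : (b / ((n:ℝ)-1)) * T ≤ (b / ((n:ℝ)-1)) * (((n:ℝ)-1) * latDiam X.1) :=
        mul_le_mul_of_nonneg_left hT1 (div_nonneg hb hn1.le)
      have heq : (b / ((n:ℝ)-1)) * (((n:ℝ)-1) * latDiam X.1) = b * latDiam X.1 := by
        field_simp
      calc (a + b / ((n:ℝ) - 1)) * T = a * T + (b / ((n:ℝ)-1)) * T := by ring
        _ ≤ a * steiner X.1 + b * latDiam X.1 := add_le_add ha' (heq ▸ hb')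
    have h2 : Real.exp ((a + b/((n:ℝ)-1)) * T) ≤
        Real.exp (a * steiner X.1 + b * latDiam X.1) := Real.exp_le_exp.mpr h1
    have hFgX : F (g X) = Real.exp (a * steiner X.1 + b * latDiam X.1) * w X.1 := rfl
    calc w X.1 = ε * (Real.exp ((a + b/((n:ℝ)-1)) * T) * w X.1) := by
          rw [hε, ← mul_assoc, ← Real.exp_add]
          have : -(a + b / ((n:ℝ) - 1)) * T + (a + b/((n:ℝ)-1)) * T = 0 := by ring
          rw [this, Real.exp_zero, one_mul]
      _ ≤ ε * (Real.exp (a * steiner X.1 + b * latDiam X.1) * w X.1) := by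
          apply mul_le_mul_of_nonneg_left _ (Real.exp_nonneg _)
          exact mul_le_mul_of_nonneg_right h2 (hw _)
      _ = ε * F (g X) := by rw [hFgX]
  have hεFg : Summable fun X : {X : Finset (Fin d → ℤ) // ∀ i, (X ∩ Λ i).Nonempty} =>
      ε * F (g X) := hFg.mul_left ε
  have hwsum : Summable fun X : {X : Finset (Fin d → ℤ) // ∀ i, (X ∩ Λ i).Nonempty} =>
      w X.1 := Summable.of_nonneg_of_le (fun X => hw _) key hεFg
  have step1 : ∑' X : {X : Finset (Fin d → ℤ) // ∀ i, (X ∩ Λ i).Nonempty}, w X.1 ≤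
      ∑' X : {X : Finset (Fin d → ℤ) // ∀ i, (X ∩ Λ i).Nonempty}, ε * F (g X) :=
    hwsum.tsum_le_tsum key hεFg
  have step2 : ∑' X : {X : Finset (Fin d → ℤ) // ∀ i, (X ∩ Λ i).Nonempty}, ε * F (g X)
      = ε * ∑' X, F (g X) := tsum_mul_left
  have step3 : ∑' X : {X : Finset (Fin d → ℤ) // ∀ i, (X ∩ Λ i).Nonempty}, F (g X) ≤
      ∑' σ, F σ :=
    hFg.tsum_le_tsum_of_inj g ginj (fun σ _ => hFnn σ) (fun X => le_refl _) hFsum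
  have step4 : ∑' σ, F σ ≤ ((Λ i₀).card : ℝ) * C := by
    have hsig : ∑' σ, F σ = ∑' (x : {x // x ∈ Λ i₀}), ∑' (X : {X : Finset (Fin d → ℤ) // x.1 ∈ X}), F ⟨x, X⟩ :=
      hFsum.tsum_sigma' (fun x => hsummable x.1)
    rw [hsig, tsum_fintype]
    calc ∑ x : {x // x ∈ Λ i₀}, ∑' X : {X : Finset (Fin d → ℤ) // x.1 ∈ X},
          F ⟨x, X⟩
        ≤ ∑ _x : {x // x ∈ Λ i₀}, C := Finset.sum_le_sum (fun x _ => hC x.1)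
      _ = ((Λ i₀).card : ℝ) * C := by
          rw [Finset.sum_const, Finset.card_univ, Fintype.card_coe, nsmul_eq_mul]
  have hεnn : 0 ≤ ε := Real.exp_nonneg _
  calc ∑' X : {X : Finset (Fin d → ℤ) // ∀ i, (X ∩ Λ i).Nonempty}, w X.1
      ≤ ε * ∑' X, F (g X) := by rw [← step2]; exact step1
    _ ≤ ε * (((Λ i₀).card : ℝ) * C) :=
        mul_le_mul_of_nonneg_left (le_trans step3 step4) hεnn
    _ = C * ((Λ i₀).card : ℝ) * ε := by ring
    _ = C * (Finset.univ.inf' ⟨⟨0, by omega⟩, Finset.mem_univ _⟩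
          fun i => ((Λ i).card : ℝ)) * ε := by rw [hi₀]
end
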